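/- arXiv:1410.2305 — 5 statements merged into one kernel-verified Lean document; each statement's English description precedes it below -/
import Mathlib

section
/- Let S be a closed operator on X with 0 ∈ ρ(S), and let A₁, A₂ be bounded linear operators on X satisfying A₁ + A₂ = S⁻², A₁A₂ = A₂A₁ = 0, and AⱼS⁻¹ = S⁻¹Aⱼ for j = 1, 2. Then the operators Pⱼ defined by D(Pⱼ) = {x ∈ X : Aⱼx ∈ D(S²)} and Pⱼx = S²Aⱼx (j = 1, 2) are closed complementary projections; moreover D(S²) ⊆ D(P₁) = D(P₂) and Pⱼx = AⱼS²x for every x ∈ D(S²). -/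
open Complex MeasureTheory Set Filter

noncomputable section

variable {E : Type*} [NormedAddCommGroup E] [NormedSpace ℂ E]

/-- `R : E →L[ℂ] E` is the (everywhere defined, bounded) inverse of `S - lam`. -/
def IsResolventAt (S : E →ₗ.[ℂ] E) (lam : ℂ) (R : E →L[ℂ] E) : Prop :=
  (∀ x, R x ∈ S.domain) ∧
  (∀ x : S.domain, R (S x - lam • (x : E)) = (x : E)) ∧
  (∀ (x : E) (hx : R x ∈ S.domain), S ⟨R x, hx⟩ - lam • R x = x)

/-- The resolvent set of the (possibly unbounded, not densely defined) operator `S`. -/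
def resolvSet (S : E →ₗ.[ℂ] E) : Set ℂ := {lam | ∃ R, IsResolventAt S lam R}

/-- The spectrum of `S`. -/
def pSpectrum (S : E →ₗ.[ℂ] E) : Set ℂ := (resolvSet S)ᶜ

-- The resolvent `(S - lam)⁻¹` of `S` at `lam` (junk value `0` if `lam ∉ ρ(S)`).
open Classical in
def res (S : E →ₗ.[ℂ] E) (lam : ℂ) : E →L[ℂ] E :=
  if h : ∃ R, IsResolventAt S lam R then h.choose else 0

/-- Condition (H): the strip `|Re lam| ≤ h` consists of resolvent points
and the resolvent is bounded by `M` there. -/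
def CondH (S : E →ₗ.[ℂ] E) (h M : ℝ) : Prop :=
  0 < h ∧ ∀ lam : ℂ, |lam.re| ≤ h → lam ∈ resolvSet S ∧ ‖res S lam‖ ≤ M

/-- The set of `x` such that the local resolvent `lam ↦ (S - lam)⁻¹ x` has a bounded analytic
extension to (a neighbourhood of) `H`; it is a linear subspace of `E`. -/
def Gsub (S : E →ₗ.[ℂ] E) (H : Set ℂ) : Submodule ℂ E where
  carrier := {x | ∃ φ : ℂ → E,
    (∃ U, IsOpen U ∧ H ⊆ U ∧ DifferentiableOn ℂ φ U) ∧
    (∃ C : ℝ, ∀ z ∈ H, ‖φ z‖ ≤ C) ∧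
    (∀ t : ℝ, φ ((t : ℂ) * Complex.I) = res S ((t : ℂ) * Complex.I) x)}
  zero_mem' := ⟨0, ⟨univ, isOpen_univ, subset_univ _, differentiableOn_const 0⟩,
    ⟨0, fun z _ => by simp⟩, fun t => by simp⟩
  add_mem' := by
    rintro a b ⟨φ, ⟨U, hU, hHU, hdU⟩, ⟨C, hC⟩, hφ⟩ ⟨ψ, ⟨V, hV, hHV, hdV⟩, ⟨D, hD⟩, hψ⟩
    refine ⟨φ + ψ, ⟨U ∩ V, hU.inter hV, subset_inter hHU hHV,
      ((hdU.mono inter_subset_left).add (hdV.mono inter_subset_right))⟩,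
      ⟨C + D, fun z hz => (norm_add_le _ _).trans (add_le_add (hC z hz) (hD z hz))⟩,
      fun t => by simp [hφ t, hψ t]⟩
  smul_mem' := by
    rintro c a ⟨φ, ⟨U, hU, hHU, hdU⟩, ⟨C, hC⟩, hφ⟩
    refine ⟨c • φ, ⟨U, hU, hHU, hdU.const_smul c⟩,
      ⟨‖c‖ * C, fun z hz => by
        rw [Pi.smul_apply, norm_smul]
        exact mul_le_mul_of_nonneg_left (hC z hz) (norm_nonneg c)⟩,
      fun t => by simp [hφ t]⟩

/-- The subspace `G₊` of `x` whose local resolvent extends boundedly and analytically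
to the closed left half plane. -/
def Gp (S : E →ₗ.[ℂ] E) : Submodule ℂ E := Gsub S {z : ℂ | z.re ≤ 0}

/-- The subspace `G₋` of `x` whose local resolvent extends boundedly and analytically
to the closed right half plane. -/
def Gm (S : E →ₗ.[ℂ] E) : Submodule ℂ E := Gsub S {z : ℂ | 0 ≤ z.re}

/-- The part of the operator `S` in the subspace `Y`: the restriction of `S` to
`{x ∈ D(S) ∩ Y : S x ∈ Y}`, regarded as an operator in `Y`. If `Y` is `S`-invariant
this is the restriction `S|Y`. -/
def partIn (S : E →ₗ.[ℂ] E) (Y : Submodule ℂ E) : ↥Y →ₗ.[ℂ] ↥Y :=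
  Submodule.toLinearPMap (S.graph.comap (Y.subtype.prodMap Y.subtype))

/-- `x ∈ D(S²)`. -/
def memD2 (S : E →ₗ.[ℂ] E) (x : E) : Prop :=
  ∃ h : x ∈ S.domain, S ⟨x, h⟩ ∈ S.domain

-- `S² x` (junk value `0` if `x ∉ D(S²)`).
open Classical in
def sqApply (S : E →ₗ.[ℂ] E) (x : E) : E :=
  if h : memD2 S x then S ⟨S ⟨x, h.choose⟩, h.choose_spec⟩ else 0

/-- `S` is dichotomous with respect to the decomposition `E = Xp ⊕ Xm`. -/
structure IsDichotomousWrt (S : E →ₗ.[ℂ] E) (Xp Xm : Submodule ℂ E) : Prop where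
  closed_p : IsClosed (Xp : Set E)
  closed_m : IsClosed (Xm : Set E)
  compl : IsCompl Xp Xm
  imag : ∀ t : ℝ, (t : ℂ) * Complex.I ∈ resolvSet S
  inv_p : ∀ x : S.domain, (x : E) ∈ Xp → S x ∈ Xp
  inv_m : ∀ x : S.domain, (x : E) ∈ Xm → S x ∈ Xm
  spec_p : pSpectrum (partIn S Xp) ⊆ {lam : ℂ | 0 < lam.re}
  spec_m : pSpectrum (partIn S Xm) ⊆ {lam : ℂ | lam.re < 0}

/-- `S` is strictly dichotomous with respect to the decomposition `E = Xp ⊕ Xm`. -/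
structure IsStrictlyDichotomousWrt (S : E →ₗ.[ℂ] E) (Xp Xm : Submodule ℂ E)
    extends IsDichotomousWrt S Xp Xm : Prop where
  bnd_p : ∃ M : ℝ, ∀ lam : ℂ, lam.re ≤ 0 →
    lam ∈ resolvSet (partIn S Xp) ∧ ‖res (partIn S Xp) lam‖ ≤ M
  bnd_m : ∃ M : ℝ, ∀ lam : ℂ, 0 ≤ lam.re →
    lam ∈ resolvSet (partIn S Xm) ∧ ‖res (partIn S Xm) lam‖ ≤ M

/-- `S` is strictly dichotomous (w.r.t. some decomposition). -/
def IsStrictlyDichotomous (S : E →ₗ.[ℂ] E) : Prop :=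
  ∃ Xp Xm : Submodule ℂ E, IsStrictlyDichotomousWrt S Xp Xm

/-- `S` is bisectorial with constant `M`. -/
def Bisectorial (S : E →ₗ.[ℂ] E) (M : ℝ) : Prop :=
  0 < M ∧ ∀ lam : ℂ, lam.re = 0 → lam ≠ 0 →
    lam ∈ resolvSet S ∧ ‖res S lam‖ ≤ M / ‖lam‖

/-- `S` is almost bisectorial with constants `M` and exponent `β`. -/
def AlmostBisectorial (S : E →ₗ.[ℂ] E) (M β : ℝ) : Prop :=
  0 < M ∧ 0 < β ∧ β < 1 ∧ ∀ lam : ℂ, lam.re = 0 → lam ≠ 0 →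
    lam ∈ resolvSet S ∧ ‖res S lam‖ ≤ M / ‖lam‖ ^ β

/-- The operator `A₊ = (2πi)⁻¹ ∫_{Re lam = h} lam⁻² (S-lam)⁻¹ dlam`. -/
def Aplus (S : E →ₗ.[ℂ] E) (h : ℝ) : E →L[ℂ] E :=
  (2 * (Real.pi : ℂ))⁻¹ •
    ∫ t : ℝ, (((h : ℂ) + (t : ℂ) * Complex.I) ^ 2)⁻¹ • res S ((h : ℂ) + (t : ℂ) * Complex.I)

/-- The operator `A₋ = -(2πi)⁻¹ ∫_{Re lam = -h} lam⁻² (S-lam)⁻¹ dlam`. -/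
def Aminus (S : E →ₗ.[ℂ] E) (h : ℝ) : E →L[ℂ] E :=
  -(2 * (Real.pi : ℂ))⁻¹ •
    ∫ t : ℝ, ((-(h : ℂ) + (t : ℂ) * Complex.I) ^ 2)⁻¹ • res S (-(h : ℂ) + (t : ℂ) * Complex.I)

/-- The operator `B₊ = (2πi)⁻¹ ∫_{Re lam = h} lam⁻¹ (S-lam)⁻¹ dlam`. -/
def Bplus (S : E →ₗ.[ℂ] E) (h : ℝ) : E →L[ℂ] E :=
  (2 * (Real.pi : ℂ))⁻¹ •
    ∫ t : ℝ, ((h : ℂ) + (t : ℂ) * Complex.I)⁻¹ • res S ((h : ℂ) + (t : ℂ) * Complex.I)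

/-- The operator `B₋ = -(2πi)⁻¹ ∫_{Re lam = -h} lam⁻¹ (S-lam)⁻¹ dlam`. -/
def Bminus (S : E →ₗ.[ℂ] E) (h : ℝ) : E →L[ℂ] E :=
  -(2 * (Real.pi : ℂ))⁻¹ •
    ∫ t : ℝ, (-(h : ℂ) + (t : ℂ) * Complex.I)⁻¹ • res S (-(h : ℂ) + (t : ℂ) * Complex.I)

/-- `M₊`, the closure of the range of `A₊`. -/
def Msubp (S : E →ₗ.[ℂ] E) (h : ℝ) : Submodule ℂ E :=
  (LinearMap.range ((Aplus S h) : E →ₗ[ℂ] E)).topologicalClosure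

/-- `M₋`, the closure of the range of `A₋`. -/
def Msubm (S : E →ₗ.[ℂ] E) (h : ℝ) : Submodule ℂ E :=
  (LinearMap.range ((Aminus S h) : E →ₗ[ℂ] E)).topologicalClosure


variable {X : Type*} [NormedAddCommGroup X] [NormedSpace ℂ X] [CompleteSpace X]

/-- the operators `Pⱼ = S² Aⱼ` are closed complementary projections,
`D(S²) ⊆ D(P₁) = D(P₂)` and `Pⱼ x = Aⱼ S² x` on `D(S²)`. -/
theorem statement0 (S : X →ₗ.[ℂ] X)
    (hclosed : IsClosed (S.graph : Set (X × X)))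
    (h0 : (0 : ℂ) ∈ resolvSet S)
    (A₁ A₂ : X →L[ℂ] X)
    (hsum : ∀ x : X, A₁ x + A₂ x = res S 0 (res S 0 x))
    (h12 : ∀ x : X, A₁ (A₂ x) = 0) (h21 : ∀ x : X, A₂ (A₁ x) = 0)
    (hcomm1 : ∀ x : X, A₁ (res S 0 x) = res S 0 (A₁ x))
    (hcomm2 : ∀ x : X, A₂ (res S 0 x) = res S 0 (A₂ x)) :
    -- P₁ and P₂ are closed (their graphs are closed)
    IsClosed {q : X × X | memD2 S (A₁ q.1) ∧ q.2 = sqApply S (A₁ q.1)} ∧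
    IsClosed {q : X × X | memD2 S (A₂ q.1) ∧ q.2 = sqApply S (A₂ q.1)} ∧
    -- D(P₁) = D(P₂)
    (∀ x : X, memD2 S (A₁ x) ↔ memD2 S (A₂ x)) ∧
    -- P₁, P₂ are projections: range ⊆ domain and P ∘ P = P
    (∀ x : X, memD2 S (A₁ x) → memD2 S (A₁ (sqApply S (A₁ x))) ∧
      sqApply S (A₁ (sqApply S (A₁ x))) = sqApply S (A₁ x)) ∧
    (∀ x : X, memD2 S (A₂ x) → memD2 S (A₂ (sqApply S (A₂ x))) ∧
      sqApply S (A₂ (sqApply S (A₂ x))) = sqApply S (A₂ x)) ∧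
    -- complementary: P₁ + P₂ = I on the common domain
    (∀ x : X, memD2 S (A₁ x) → sqApply S (A₁ x) + sqApply S (A₂ x) = x) ∧
    -- D(S²) ⊆ D(P₁) = D(P₂) and Pⱼ x = Aⱼ S² x for x ∈ D(S²)
    (∀ x : X, memD2 S x → memD2 S (A₁ x) ∧ memD2 S (A₂ x) ∧
      sqApply S (A₁ x) = A₁ (sqApply S x) ∧ sqApply S (A₂ x) = A₂ (sqApply S x)) := by
  classical
  set R := res S 0 with hRdef
  have hres : IsResolventAt S 0 R := by
    rw [hRdef, res]
    split
    · next h => exact h.choose_spec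
    · next h => exact absurd h0 h
  obtain ⟨hmem, hleft, hright⟩ := hres
  have hSR : ∀ x, S ⟨R x, hmem x⟩ = x := by
    intro x
    have := hright x (hmem x)
    simpa using this
  have hRS : ∀ x : S.domain, R (S x) = (x : X) := by
    intro x
    have := hleft x
    simpa using this
  have hRinj : ∀ a b : X, R a = R b → a = b := by
    intro a b hab
    have : (⟨R a, hmem a⟩ : S.domain) = ⟨R b, hmem b⟩ := Subtype.ext hab
    calc a = S ⟨R a, hmem a⟩ := (hSR a).symm
    _ = S ⟨R b, hmem b⟩ := by rw [this]
    _ = b := hSR b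
  -- D(S²) = range R², and sqApply (R (R z)) = z
  have hD2 : ∀ z : X, memD2 S (R (R z)) := by
    intro z
    refine ⟨hmem _, ?_⟩
    have : S ⟨R (R z), hmem (R z)⟩ = R z := hSR (R z)
    rw [this]
    exact hmem z
  have hsq : ∀ z : X, sqApply S (R (R z)) = z := by
    intro z
    rw [sqApply, dif_pos (hD2 z)]
    have e1 : (⟨S ⟨R (R z), (hD2 z).choose⟩, (hD2 z).choose_spec⟩ : S.domain)
        = ⟨R z, hmem z⟩ := Subtype.ext (hSR (R z))
    rw [e1]
    exact hSR z
  have hrec : ∀ y : X, memD2 S y → R (R (sqApply S y)) = y := by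
    intro y hy
    rw [sqApply, dif_pos hy]
    rw [hRS ⟨S ⟨y, hy.choose⟩, hy.choose_spec⟩]
    exact hRS ⟨y, hy.choose⟩
  -- characterization of the graph of S²
  have hchar : ∀ y z : X, (memD2 S y ∧ sqApply S y = z) ↔ R (R z) = y := by
    intro y z
    constructor
    · rintro ⟨hy, rfl⟩
      exact hrec y hy
    · rintro rfl
      exact ⟨hD2 z, hsq z⟩
  have hRRsum : ∀ x : X, A₁ x + A₂ x = R (R x) := hsum
  have hcommRR1 : ∀ x : X, A₁ (R (R x)) = R (R (A₁ x)) := by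
    intro x; rw [hcomm1, hcomm1]
  have hcommRR2 : ∀ x : X, A₂ (R (R x)) = R (R (A₂ x)) := by
    intro x; rw [hcomm2, hcomm2]
  -- closedness of the two graphs
  have hgraph1 : {q : X × X | memD2 S (A₁ q.1) ∧ q.2 = sqApply S (A₁ q.1)}
      = {q : X × X | A₁ q.1 = R (R q.2)} := by
    ext q
    simp only [Set.mem_setOf_eq]
    constructor
    · rintro ⟨h1, h2⟩
      rw [h2]
      exact (hrec _ h1).symm
    · intro h
      have := (hchar (A₁ q.1) q.2).2 h.symm
      exact ⟨this.1, this.2.symm⟩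
  have hgraph2 : {q : X × X | memD2 S (A₂ q.1) ∧ q.2 = sqApply S (A₂ q.1)}
      = {q : X × X | A₂ q.1 = R (R q.2)} := by
    ext q
    simp only [Set.mem_setOf_eq]
    constructor
    · rintro ⟨h1, h2⟩
      rw [h2]
      exact (hrec _ h1).symm
    · intro h
      have := (hchar (A₂ q.1) q.2).2 h.symm
      exact ⟨this.1, this.2.symm⟩
  have hc1 : IsClosed {q : X × X | memD2 S (A₁ q.1) ∧ q.2 = sqApply S (A₁ q.1)} := by
    rw [hgraph1]
    exact isClosed_eq (A₁.continuous.comp continuous_fst)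
      (R.continuous.comp (R.continuous.comp continuous_snd))
  have hc2 : IsClosed {q : X × X | memD2 S (A₂ q.1) ∧ q.2 = sqApply S (A₂ q.1)} := by
    rw [hgraph2]
    exact isClosed_eq (A₂.continuous.comp continuous_fst)
      (R.continuous.comp (R.continuous.comp continuous_snd))
  -- transfer of domains
  have hiff12 : ∀ x : X, memD2 S (A₁ x) →
      memD2 S (A₂ x) ∧ sqApply S (A₂ x) = x - sqApply S (A₁ x) := by
    intro x hx
    have h1 : A₂ x = R (R (x - sqApply S (A₁ x))) := by
      have := hRRsum x
      rw [map_sub, map_sub, hrec _ hx]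
      rw [← this]
      abel
    have := (hchar (A₂ x) (x - sqApply S (A₁ x))).2 h1.symm
    exact this
  have hiff21 : ∀ x : X, memD2 S (A₂ x) →
      memD2 S (A₁ x) ∧ sqApply S (A₁ x) = x - sqApply S (A₂ x) := by
    intro x hx
    have h1 : A₁ x = R (R (x - sqApply S (A₂ x))) := by
      have := hRRsum x
      rw [map_sub, map_sub, hrec _ hx]
      rw [← this]
      abel
    have := (hchar (A₁ x) (x - sqApply S (A₂ x))).2 h1.symm
    exact this
  refine ⟨hc1, hc2, fun x => ⟨fun h => (hiff12 x h).1, fun h => (hiff21 x h).1⟩,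
    ?_, ?_, ?_, ?_⟩
  · -- P₁ projection
    intro x hx
    set z := sqApply S (A₁ x) with hz
    have hA1x : A₁ x = R (R z) := (hrec _ hx).symm
    have hA2z : A₂ z = 0 := by
      have : R (R (A₂ z)) = R (R 0) := by
        rw [← hcommRR2, ← hA1x, h21, map_zero, map_zero]
      exact hRinj _ _ (hRinj _ _ this)
    have hA1z : A₁ z = R (R z) := by
      have := hRRsum z
      rw [hA2z, add_zero] at this
      exact this
    have := (hchar (A₁ z) z).2 hA1z.symm
    exact ⟨this.1, this.2⟩
  · -- P₂ projection
    intro x hx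
    set z := sqApply S (A₂ x) with hz
    have hA2x : A₂ x = R (R z) := (hrec _ hx).symm
    have hA1z : A₁ z = 0 := by
      have : R (R (A₁ z)) = R (R 0) := by
        rw [← hcommRR1, ← hA2x, h12, map_zero, map_zero]
      exact hRinj _ _ (hRinj _ _ this)
    have hA2z : A₂ z = R (R z) := by
      have := hRRsum z
      rw [hA1z, zero_add] at this
      exact this
    have := (hchar (A₂ z) z).2 hA2z.symm
    exact ⟨this.1, this.2⟩
  · -- complementary
    intro x hx
    rw [(hiff12 x hx).2]
    abel
  · -- D(S²) ⊆ D(P₁) = D(P₂), Pⱼ x = Aⱼ S² x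
    intro x hx
    have hx' : x = R (R (sqApply S x)) := (hrec _ hx).symm
    have h1 : A₁ x = R (R (A₁ (sqApply S x))) := by
      rw [← hcommRR1 (sqApply S x), ← hx']
    have h2 : A₂ x = R (R (A₂ (sqApply S x))) := by
      rw [← hcommRR2 (sqApply S x), ← hx']
    have c1 := (hchar (A₁ x) (A₁ (sqApply S x))).2 h1.symm
    have c2 := (hchar (A₂ x) (A₂ (sqApply S x))).2 h2.symm
    exact ⟨c1.1, c2.1, c1.2, c2.2⟩

end
end

section
/- Let S be a closed operator on X with 0 ∈ ρ(S), and let A₁, A₂ be bounded linear operators on X satisfying A₁ + A₂ = S⁻², A₁A₂ = A₂A₁ = 0, and AⱼS⁻¹ = S⁻¹Aⱼ for j = 1, 2, and let Pⱼ be the closed projections defined by D(Pⱼ) = {x ∈ X : Aⱼx ∈ D(S²)} and Pⱼx = S²Aⱼx. Then the subspaces X₁ = range(P₁) and X₂ = range(P₂) satisfy X₁ = ker(A₂) and X₂ = ker(A₁); they are closed, S-invariant, and (S − λ)⁻¹-invariant for every λ ∈ ρ(S); and σ(S) = σ(S|X₁) ∪ σ(S|X₂). -/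
open Complex MeasureTheory Set Filter

noncomputable section

variable {E : Type*} [NormedAddCommGroup E] [NormedSpace ℂ E]

variable {X : Type*} [NormedAddCommGroup X] [NormedSpace ℂ X] [CompleteSpace X]


section AuxLemmas

variable {S : X →ₗ.[ℂ] X}

lemma res_isResolventAt {lam : ℂ} (h : lam ∈ resolvSet S) :
    IsResolventAt S lam (res S lam) := by
  have h' : ∃ R, IsResolventAt S lam R := h
  rw [res, dif_pos h']
  exact h'.choose_spec

lemma sqApply_eq {z : X} (h1 : z ∈ S.domain) (h2 : S ⟨z, h1⟩ ∈ S.domain) :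
    sqApply S z = S ⟨S ⟨z, h1⟩, h2⟩ := by
  have hd : memD2 S z := ⟨h1, h2⟩
  rw [sqApply, dif_pos hd]

lemma partIn_graph (Y : Submodule ℂ X) :
    (partIn S Y).graph = S.graph.comap (Y.subtype.prodMap Y.subtype) := by
  apply Submodule.toLinearPMap_graph_eq
  rintro ⟨a, b⟩ hx hx0
  simp only [Submodule.mem_comap, LinearMap.prodMap_apply, Submodule.coe_subtype] at hx
  have ha0 : a = 0 := hx0
  have hb : (b : X) = 0 := S.graph_fst_eq_zero_snd hx (by simp [ha0])
  exact Subtype.ext hb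

lemma partIn_graph_mem_iff {Y : Submodule ℂ X} {a b : Y} :
    (a, b) ∈ (partIn S Y).graph ↔ ((a : X), (b : X)) ∈ S.graph := by
  rw [partIn_graph, Submodule.mem_comap]
  rfl

lemma mem_partIn_domain {Y : Submodule ℂ X} {a : Y}
    (ha : (a : X) ∈ S.domain) (hS : S ⟨(a : X), ha⟩ ∈ Y) : a ∈ (partIn S Y).domain := by
  rw [LinearPMap.mem_domain_iff]
  exact ⟨⟨S ⟨(a : X), ha⟩, hS⟩, partIn_graph_mem_iff.2 (S.mem_graph ⟨(a : X), ha⟩)⟩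

lemma partIn_spec {Y : Submodule ℂ X} {a : Y} (hd : a ∈ (partIn S Y).domain) :
    ∃ ha : (a : X) ∈ S.domain, ((partIn S Y ⟨a, hd⟩ : Y) : X) = S ⟨(a : X), ha⟩ := by
  have h := (partIn S Y).mem_graph ⟨a, hd⟩
  rw [partIn_graph_mem_iff] at h
  have ha := S.mem_domain_of_mem_graph h
  exact ⟨ha, (LinearPMap.image_iff ha).2 h⟩

lemma resolv_partIn {Y : Submodule ℂ X} {lam : ℂ}
    (hlam : lam ∈ resolvSet S) (hY : ∀ x ∈ Y, res S lam x ∈ Y) :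
    lam ∈ resolvSet (partIn S Y) := by
  obtain ⟨hd, hleft, hright⟩ := res_isResolventAt hlam
  let R' : ↥Y →L[ℂ] ↥Y :=
    ContinuousLinearMap.codRestrict ((res S lam).comp Y.subtypeL) Y (fun x => hY _ x.2)
  have hR'val : ∀ x : Y, (R' x : X) = res S lam (x : X) := fun x => rfl
  refine ⟨R', ?_, ?_, ?_⟩
  · intro x
    have ha : res S lam (x : X) ∈ S.domain := hd _
    have h3 := hright (x : X) ha
    have hmem : S ⟨res S lam (x : X), ha⟩ ∈ Y := by
      rw [sub_eq_iff_eq_add.mp h3]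
      exact Y.add_mem x.2 (Y.smul_mem _ (hY _ x.2))
    exact mem_partIn_domain ha hmem
  · rintro ⟨⟨a, haY⟩, hd2⟩
    obtain ⟨ha, hTx⟩ := partIn_spec hd2
    apply Subtype.ext
    rw [hR'val]
    have hcoe : ((partIn S Y ⟨⟨a, haY⟩, hd2⟩ - lam • (⟨a, haY⟩ : Y) : Y) : X)
        = ((partIn S Y ⟨⟨a, haY⟩, hd2⟩ : Y) : X) - lam • a := by
      simp
    rw [hcoe, hTx]
    exact hleft ⟨a, ha⟩
  · intro x h
    obtain ⟨ha, hTx⟩ := partIn_spec h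
    apply Subtype.ext
    have hcoe : ((partIn S Y ⟨R' x, h⟩ - lam • R' x : Y) : X)
        = ((partIn S Y ⟨R' x, h⟩ : Y) : X) - lam • (R' x : X) := by
      simp
    rw [hcoe, hTx]
    exact hright (x : X) (hd _)

end AuxLemmas

/-- the subspaces `X₁ = range P₁`, `X₂ = range P₂` satisfy `X₁ = ker A₂`,
`X₂ = ker A₁`, are closed, `S`- and `(S-lam)⁻¹`-invariant, and
`σ(S) = σ(S|X₁) ∪ σ(S|X₂)`. -/
theorem statement1 (S : X →ₗ.[ℂ] X)
    (hclosed : IsClosed (S.graph : Set (X × X)))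
    (h0 : (0 : ℂ) ∈ resolvSet S)
    (A₁ A₂ : X →L[ℂ] X)
    (hsum : ∀ x : X, A₁ x + A₂ x = res S 0 (res S 0 x))
    (h12 : ∀ x : X, A₁ (A₂ x) = 0) (h21 : ∀ x : X, A₂ (A₁ x) = 0)
    (hcomm1 : ∀ x : X, A₁ (res S 0 x) = res S 0 (A₁ x))
    (hcomm2 : ∀ x : X, A₂ (res S 0 x) = res S 0 (A₂ x)) :
    ∃ Y₁ Y₂ : Submodule ℂ X,
      -- Y₁ = range P₁, Y₂ = range P₂
      ((Y₁ : Set X) = {y : X | ∃ x : X, memD2 S (A₁ x) ∧ y = sqApply S (A₁ x)}) ∧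
      ((Y₂ : Set X) = {y : X | ∃ x : X, memD2 S (A₂ x) ∧ y = sqApply S (A₂ x)}) ∧
      -- X₁ = ker A₂, X₂ = ker A₁
      ((Y₁ : Set X) = {x : X | A₂ x = 0}) ∧
      ((Y₂ : Set X) = {x : X | A₁ x = 0}) ∧
      -- closedness
      IsClosed (Y₁ : Set X) ∧ IsClosed (Y₂ : Set X) ∧
      -- S-invariance
      (∀ x : S.domain, (x : X) ∈ Y₁ → S x ∈ Y₁) ∧
      (∀ x : S.domain, (x : X) ∈ Y₂ → S x ∈ Y₂) ∧
      -- resolvent invariance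
      (∀ lam ∈ resolvSet S, ∀ x ∈ Y₁, res S lam x ∈ Y₁) ∧
      (∀ lam ∈ resolvSet S, ∀ x ∈ Y₂, res S lam x ∈ Y₂) ∧
      -- spectral splitting
      pSpectrum S = pSpectrum (partIn S Y₁) ∪ pSpectrum (partIn S Y₂) := by
  obtain ⟨hRdom, hRleft, hRright⟩ := res_isResolventAt h0
  simp only [zero_smul, sub_zero] at hRleft hRright
  set R := res S 0 with hRdef
  -- basic facts about R = S⁻¹
  have hRS : ∀ (a : X) (ha : a ∈ S.domain), R (S ⟨a, ha⟩) = a := fun a ha => hRleft ⟨a, ha⟩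
  have hSR : ∀ (a : X) (ha : a ∈ S.domain) (y : X), a = R y → S ⟨a, ha⟩ = y := by
    rintro a ha y rfl
    exact hRright y ha
  have hRinj : ∀ x : X, R x = 0 → x = 0 := by
    intro x hx
    have h1 : R x ∈ S.domain := hRdom x
    have h2 := hSR (R x) h1 x rfl
    rw [show (⟨R x, h1⟩ : S.domain) = 0 from Subtype.ext hx, S.map_zero] at h2
    exact h2.symm
  -- commutation with S
  have hcommS : ∀ (A : X →L[ℂ] X), (∀ x, A (R x) = R (A x)) →
      ∀ (x : X) (hx : x ∈ S.domain), ∃ h : A x ∈ S.domain, S ⟨A x, h⟩ = A (S ⟨x, hx⟩) := by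
    intro A hA x hx
    have key : A x = R (A (S ⟨x, hx⟩)) := by rw [← hA, hRS x hx]
    have hm : A x ∈ S.domain := by rw [key]; exact hRdom _
    exact ⟨hm, hSR _ hm _ key⟩
  -- commutation with every resolvent
  have hcommRes : ∀ (A : X →L[ℂ] X), (∀ x, A (R x) = R (A x)) →
      ∀ lam ∈ resolvSet S, ∀ x, A (res S lam x) = res S lam (A x) := by
    intro A hA lam hlam x
    obtain ⟨hd, hleft, hright⟩ := res_isResolventAt hlam
    have hwd : res S lam x ∈ S.domain := hd x
    obtain ⟨hm, hSA⟩ := hcommS A hA (res S lam x) hwd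
    have h3 : S ⟨res S lam x, hwd⟩ - lam • res S lam x = x := hright x hwd
    have h4 := hleft ⟨A (res S lam x), hm⟩
    rw [show ((⟨A (res S lam x), hm⟩ : S.domain) : X) = A (res S lam x) from rfl] at h4
    rw [hSA] at h4
    have h5 : A (S ⟨res S lam x, hwd⟩) - lam • A (res S lam x) = A x := by
      rw [← ContinuousLinearMap.map_smul, ← map_sub, h3]
    rw [h5] at h4
    exact h4.symm
  -- range of P = kernel of the other A
  have hrk : ∀ (A B : X →L[ℂ] X), (∀ x, A x + B x = R (R x)) → (∀ x, B (A x) = 0) →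
      (∀ x, B (R x) = R (B x)) →
      ((LinearMap.ker (B : X →ₗ[ℂ] X) : Set X) = {y : X | ∃ x : X, memD2 S (A x) ∧ y = sqApply S (A x)}) := by
    intro A B hAB hBA hB
    ext y
    simp only [SetLike.mem_coe, LinearMap.mem_ker, ContinuousLinearMap.coe_coe, Set.mem_setOf_eq]
    constructor
    · intro hy
      have hAy : A y = R (R y) := by
        have h := hAB y
        rwa [hy, add_zero] at h
      have h1 : A y ∈ S.domain := by rw [hAy]; exact hRdom _
      have e1 : S ⟨A y, h1⟩ = R y := hSR _ h1 _ hAy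
      have h2 : S ⟨A y, h1⟩ ∈ S.domain := by rw [e1]; exact hRdom _
      refine ⟨y, ⟨h1, h2⟩, ?_⟩
      rw [sqApply_eq h1 h2]
      exact (hSR _ h2 y e1).symm
    · rintro ⟨x, ⟨h1, h2⟩, rfl⟩
      rw [sqApply_eq h1 h2]
      have e1 : R (S ⟨S ⟨A x, h1⟩, h2⟩) = S ⟨A x, h1⟩ := hRS _ h2
      have e2 : R (R (S ⟨S ⟨A x, h1⟩, h2⟩)) = A x := by rw [e1]; exact hRS _ h1
      have e3 : R (R (B (S ⟨S ⟨A x, h1⟩, h2⟩))) = 0 := by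
        rw [← hB, ← hB, e2, hBA]
      exact hRinj _ (hRinj _ e3)
  have hsum' : ∀ x : X, A₂ x + A₁ x = R (R x) := by
    intro x
    rw [add_comm]
    exact hsum x
  -- S-invariance of kernels
  have hSinv : ∀ (B : X →L[ℂ] X), (∀ x, B (R x) = R (B x)) →
      ∀ x : S.domain, B ↑x = 0 → B (S x) = 0 := by
    intro B hB x hx
    obtain ⟨x, hxd⟩ := x
    obtain ⟨hm, hSA⟩ := hcommS B hB x hxd
    rw [← hSA, show (⟨B x, hm⟩ : S.domain) = 0 from Subtype.ext hx, S.map_zero]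
  refine ⟨LinearMap.ker (A₂ : X →ₗ[ℂ] X), LinearMap.ker (A₁ : X →ₗ[ℂ] X), ?_, ?_, ?_, ?_, ?_, ?_, ?_, ?_, ?_, ?_, ?_⟩
  · exact hrk A₁ A₂ hsum h21 hcomm2
  · exact hrk A₂ A₁ hsum' h12 hcomm1
  · ext x; simp [LinearMap.mem_ker]
  · ext x; simp [LinearMap.mem_ker]
  · have h : (LinearMap.ker (A₂ : X →ₗ[ℂ] X) : Set X) = A₂ ⁻¹' {0} := by
      ext x; simp [LinearMap.mem_ker]
    rw [h]
    exact IsClosed.preimage A₂.continuous isClosed_singleton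
  · have h : (LinearMap.ker (A₁ : X →ₗ[ℂ] X) : Set X) = A₁ ⁻¹' {0} := by
      ext x; simp [LinearMap.mem_ker]
    rw [h]
    exact IsClosed.preimage A₁.continuous isClosed_singleton
  · intro x hx
    exact LinearMap.mem_ker.2 (hSinv A₂ hcomm2 x (LinearMap.mem_ker.1 hx))
  · intro x hx
    exact LinearMap.mem_ker.2 (hSinv A₁ hcomm1 x (LinearMap.mem_ker.1 hx))
  · intro lam hlam x hx
    rw [LinearMap.mem_ker, ContinuousLinearMap.coe_coe] at hx ⊢
    rw [hcommRes A₂ hcomm2 lam hlam x, hx]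
    exact map_zero _
  · intro lam hlam x hx
    rw [LinearMap.mem_ker, ContinuousLinearMap.coe_coe] at hx ⊢
    rw [hcommRes A₁ hcomm1 lam hlam x, hx]
    exact map_zero _
  · -- spectral splitting
    have dirB : ∀ lam : ℂ, lam ∈ resolvSet (partIn S (LinearMap.ker (A₂ : X →ₗ[ℂ] X))) →
        lam ∈ resolvSet (partIn S (LinearMap.ker (A₁ : X →ₗ[ℂ] X))) → lam ∈ resolvSet S := by
      intro lam hl1 hl2
      obtain ⟨h1d, h1left, h1right⟩ := res_isResolventAt hl1
      obtain ⟨h2d, h2left, h2right⟩ := res_isResolventAt hl2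
      set r₁ := res (partIn S (LinearMap.ker (A₂ : X →ₗ[ℂ] X))) lam with hr₁
      set r₂ := res (partIn S (LinearMap.ker (A₁ : X →ₗ[ℂ] X))) lam with hr₂
      let c₁ : X →L[ℂ] ↥(LinearMap.ker (A₂ : X →ₗ[ℂ] X)) :=
        A₁.codRestrict _ (fun x => LinearMap.mem_ker.2 (h21 x))
      let c₂ : X →L[ℂ] ↥(LinearMap.ker (A₁ : X →ₗ[ℂ] X)) :=
        A₂.codRestrict _ (fun x => LinearMap.mem_ker.2 (h12 x))
      let u : X →L[ℂ] X := R + lam • (R.comp R) +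
        (lam ^ 2) • ((LinearMap.ker (A₂ : X →ₗ[ℂ] X)).subtypeL.comp (r₁.comp c₁) +
                     (LinearMap.ker (A₁ : X →ₗ[ℂ] X)).subtypeL.comp (r₂.comp c₂))
      have hu : ∀ x : X, u x = R x + lam • R (R x) +
          lam ^ 2 • (((r₁ (c₁ x)) : X) + ((r₂ (c₂ x)) : X)) := fun x => rfl
      have hv₁ : ∀ x : X, ∃ hm : ((r₁ (c₁ x)) : X) ∈ S.domain,
          S ⟨((r₁ (c₁ x)) : X), hm⟩ = A₁ x + lam • ((r₁ (c₁ x)) : X) := by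
        intro x
        have hdm := h1d (c₁ x)
        obtain ⟨ha, hTx⟩ := partIn_spec hdm
        refine ⟨ha, ?_⟩
        have h4 := congrArg (Subtype.val) (h1right (c₁ x) hdm)
        simp only [AddSubgroupClass.coe_sub, SetLike.val_smul] at h4
        rw [hTx] at h4
        rw [sub_eq_iff_eq_add] at h4
        exact h4
      have hv₂ : ∀ x : X, ∃ hm : ((r₂ (c₂ x)) : X) ∈ S.domain,
          S ⟨((r₂ (c₂ x)) : X), hm⟩ = A₂ x + lam • ((r₂ (c₂ x)) : X) := by
        intro x
        have hdm := h2d (c₂ x)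
        obtain ⟨ha, hTx⟩ := partIn_spec hdm
        refine ⟨ha, ?_⟩
        have h4 := congrArg (Subtype.val) (h2right (c₂ x) hdm)
        simp only [AddSubgroupClass.coe_sub, SetLike.val_smul] at h4
        rw [hTx] at h4
        rw [sub_eq_iff_eq_add] at h4
        exact h4
      refine ⟨u, ?_, ?_, ?_⟩
      · intro x
        obtain ⟨hm₁, -⟩ := hv₁ x
        obtain ⟨hm₂, -⟩ := hv₂ x
        rw [hu x]
        exact S.domain.add_mem (S.domain.add_mem (hRdom x)
          (S.domain.smul_mem _ (hRdom _)))
          (S.domain.smul_mem _ (S.domain.add_mem hm₁ hm₂))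
      · rintro ⟨xv, hxd⟩
        have e1 : R (S ⟨xv, hxd⟩ - lam • xv) = xv - lam • R xv := by
          rw [map_sub, ContinuousLinearMap.map_smul, hRS xv hxd]
        obtain ⟨hm₁, hSA₁⟩ := hcommS A₁ hcomm1 xv hxd
        obtain ⟨hm₂, hSA₂⟩ := hcommS A₂ hcomm2 xv hxd
        have hY₁ : A₁ xv ∈ LinearMap.ker (A₂ : X →ₗ[ℂ] X) := LinearMap.mem_ker.2 (h21 xv)
        have hY₂ : A₂ xv ∈ LinearMap.ker (A₁ : X →ₗ[ℂ] X) := LinearMap.mem_ker.2 (h12 xv)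
        have hSY₁ : S ⟨A₁ xv, hm₁⟩ ∈ LinearMap.ker (A₂ : X →ₗ[ℂ] X) := by
          rw [hSA₁]; exact LinearMap.mem_ker.2 (h21 _)
        have hSY₂ : S ⟨A₂ xv, hm₂⟩ ∈ LinearMap.ker (A₁ : X →ₗ[ℂ] X) := by
          rw [hSA₂]; exact LinearMap.mem_ker.2 (h12 _)
        have hd₁ : (⟨A₁ xv, hY₁⟩ : LinearMap.ker (A₂ : X →ₗ[ℂ] X)) ∈ (partIn S (LinearMap.ker (A₂ : X →ₗ[ℂ] X))).domain :=
          mem_partIn_domain hm₁ hSY₁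
        have hd₂ : (⟨A₂ xv, hY₂⟩ : LinearMap.ker (A₁ : X →ₗ[ℂ] X)) ∈ (partIn S (LinearMap.ker (A₁ : X →ₗ[ℂ] X))).domain :=
          mem_partIn_domain hm₂ hSY₂
        obtain ⟨ha₁, hT₁⟩ := partIn_spec hd₁
        obtain ⟨ha₂, hT₂⟩ := partIn_spec hd₂
        have e3 : ((r₁ (c₁ (S ⟨xv, hxd⟩ - lam • xv))) : X) = A₁ xv := by
          have harg : c₁ (S ⟨xv, hxd⟩ - lam • xv)
              = partIn S (LinearMap.ker (A₂ : X →ₗ[ℂ] X)) ⟨⟨A₁ xv, hY₁⟩, hd₁⟩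
                - lam • ((⟨⟨A₁ xv, hY₁⟩, hd₁⟩ :
                    (partIn S (LinearMap.ker (A₂ : X →ₗ[ℂ] X))).domain) : LinearMap.ker (A₂ : X →ₗ[ℂ] X)) := by
            apply Subtype.ext
            have hl : ((c₁ (S ⟨xv, hxd⟩ - lam • xv)) : X) = A₁ (S ⟨xv, hxd⟩ - lam • xv) := rfl
            rw [hl]
            have hco : ((partIn S (LinearMap.ker (A₂ : X →ₗ[ℂ] X)) ⟨⟨A₁ xv, hY₁⟩, hd₁⟩
                - lam • ((⟨⟨A₁ xv, hY₁⟩, hd₁⟩ :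
                    (partIn S (LinearMap.ker (A₂ : X →ₗ[ℂ] X))).domain) : LinearMap.ker (A₂ : X →ₗ[ℂ] X))
                : LinearMap.ker (A₂ : X →ₗ[ℂ] X)) : X)
                = ((partIn S (LinearMap.ker (A₂ : X →ₗ[ℂ] X)) ⟨⟨A₁ xv, hY₁⟩, hd₁⟩ : LinearMap.ker (A₂ : X →ₗ[ℂ] X)) : X)
                  - lam • A₁ xv := by simp
            rw [hco, hT₁, map_sub, ContinuousLinearMap.map_smul]
            congr 1
            exact hSA₁.symm
          rw [harg, h1left ⟨⟨A₁ xv, hY₁⟩, hd₁⟩]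
        have e4 : ((r₂ (c₂ (S ⟨xv, hxd⟩ - lam • xv))) : X) = A₂ xv := by
          have harg : c₂ (S ⟨xv, hxd⟩ - lam • xv)
              = partIn S (LinearMap.ker (A₁ : X →ₗ[ℂ] X)) ⟨⟨A₂ xv, hY₂⟩, hd₂⟩
                - lam • ((⟨⟨A₂ xv, hY₂⟩, hd₂⟩ :
                    (partIn S (LinearMap.ker (A₁ : X →ₗ[ℂ] X))).domain) : LinearMap.ker (A₁ : X →ₗ[ℂ] X)) := by
            apply Subtype.ext
            have hl : ((c₂ (S ⟨xv, hxd⟩ - lam • xv)) : X) = A₂ (S ⟨xv, hxd⟩ - lam • xv) := rfl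
            rw [hl]
            have hco : ((partIn S (LinearMap.ker (A₁ : X →ₗ[ℂ] X)) ⟨⟨A₂ xv, hY₂⟩, hd₂⟩
                - lam • ((⟨⟨A₂ xv, hY₂⟩, hd₂⟩ :
                    (partIn S (LinearMap.ker (A₁ : X →ₗ[ℂ] X))).domain) : LinearMap.ker (A₁ : X →ₗ[ℂ] X))
                : LinearMap.ker (A₁ : X →ₗ[ℂ] X)) : X)
                = ((partIn S (LinearMap.ker (A₁ : X →ₗ[ℂ] X)) ⟨⟨A₂ xv, hY₂⟩, hd₂⟩ : LinearMap.ker (A₁ : X →ₗ[ℂ] X)) : X)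
                  - lam • A₂ xv := by simp
            rw [hco, hT₂, map_sub, ContinuousLinearMap.map_smul]
            congr 1
            exact hSA₂.symm
          rw [harg, h2left ⟨⟨A₂ xv, hY₂⟩, hd₂⟩]
        show u (S ⟨xv, hxd⟩ - lam • xv) = xv
        rw [hu (S ⟨xv, hxd⟩ - lam • xv)]
        rw [show R (R (S ⟨xv, hxd⟩ - lam • xv)) = R xv - lam • R (R xv) by
          rw [e1, map_sub, ContinuousLinearMap.map_smul], e1, e3, e4, ← hsum xv]
        module
      · intro x hx
        obtain ⟨hm₁, hs₁⟩ := hv₁ x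
        obtain ⟨hm₂, hs₂⟩ := hv₂ x
        have split : S ⟨u x, hx⟩ =
            S ⟨R x, hRdom x⟩ + lam • S ⟨R (R x), hRdom _⟩ +
            lam ^ 2 • (S ⟨((r₁ (c₁ x)) : X), hm₁⟩ + S ⟨((r₂ (c₂ x)) : X), hm₂⟩) := by
          have e : (⟨u x, hx⟩ : S.domain) =
              ⟨R x, hRdom x⟩ + lam • ⟨R (R x), hRdom _⟩ +
              lam ^ 2 • (⟨((r₁ (c₁ x)) : X), hm₁⟩ + ⟨((r₂ (c₂ x)) : X), hm₂⟩) :=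
            Subtype.ext (hu x)
          rw [e, S.map_add, S.map_add, S.map_smul, S.map_smul, S.map_add]
        rw [split, hSR (R x) (hRdom x) x rfl, hSR (R (R x)) (hRdom _) (R x) rfl,
          hs₁, hs₂, hu x, ← hsum x]
        module
    ext lam
    simp only [pSpectrum, Set.mem_compl_iff, Set.mem_union]
    rw [← not_and_or]
    apply not_congr
    constructor
    · intro hlam
      refine ⟨resolv_partIn hlam ?_, resolv_partIn hlam ?_⟩
      · intro x hx
        rw [LinearMap.mem_ker, ContinuousLinearMap.coe_coe] at hx
        rw [LinearMap.mem_ker, ContinuousLinearMap.coe_coe]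
        rw [hcommRes A₂ hcomm2 lam hlam x, hx]
        exact map_zero _
      · intro x hx
        rw [LinearMap.mem_ker, ContinuousLinearMap.coe_coe] at hx
        rw [LinearMap.mem_ker, ContinuousLinearMap.coe_coe]
        rw [hcommRes A₁ hcomm1 lam hlam x, hx]
        exact map_zero _
    · rintro ⟨hl1, hl2⟩
      exact dirB lam hl1 hl2

end
end

section
/- Let S be an operator on X which is dichotomous with respect to the decomposition X = X₊ ⊕ X₋. Then D(S) = (D(S) ∩ X₊) ⊕ (D(S) ∩ X₋), σ(S) = σ(S|X₊) ∪ σ(S|X₋), and X₊ and X₋ are (S − λ)⁻¹-invariant for every λ ∈ ρ(S). If moreover S is strictly dichotomous with respect to this decomposition, then there exist h > 0 and M > 0 such that the strip {λ ∈ ℂ : |Re λ| ≤ h} is contained in ρ(S) and sup_{|Re λ| ≤ h} ‖(S − λ)⁻¹‖ ≤ M. -/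
open Complex MeasureTheory Set Filter

noncomputable section

variable {E : Type*} [NormedAddCommGroup E] [NormedSpace ℂ E]

section AuxLemmas

variable {F : Type*} [NormedAddCommGroup F] [NormedSpace ℂ F]

theorem isResolventAt_unique {S : F →ₗ.[ℂ] F} {lam : ℂ} {R1 R2 : F →L[ℂ] F}
    (h1 : IsResolventAt S lam R1) (h2 : IsResolventAt S lam R2) : R1 = R2 := by
  ext x
  have hx := h2.1 x
  calc R1 x = R1 (S ⟨R2 x, hx⟩ - lam • R2 x) := by rw [h2.2.2 x hx]
    _ = R2 x := h1.2.1 ⟨R2 x, hx⟩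

theorem res_spec {S : F →ₗ.[ℂ] F} {lam : ℂ} (h : lam ∈ resolvSet S) :
    IsResolventAt S lam (res S lam) := by
  have h' : ∃ R, IsResolventAt S lam R := h
  unfold res
  rw [dif_pos h']
  exact h'.choose_spec

theorem res_eq {S : F →ₗ.[ℂ] F} {lam : ℂ} {R : F →L[ℂ] F} (h : IsResolventAt S lam R) :
    res S lam = R :=
  isResolventAt_unique (res_spec ⟨R, h⟩) h

theorem partIn_graph_eq (S : F →ₗ.[ℂ] F) (Y : Submodule ℂ F) :
    (partIn S Y).graph = S.graph.comap (Y.subtype.prodMap Y.subtype) := by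
  apply Submodule.toLinearPMap_graph_eq
  rintro ⟨a, b⟩ hab h0
  simp only [Submodule.mem_comap, LinearMap.prodMap_apply, Submodule.coe_subtype] at hab
  rcases S.mem_graph_iff.mp hab with ⟨y, hy1, hy2⟩
  dsimp only at hy1 hy2
  subst h0
  have hy0 : y = 0 := Subtype.ext (by simpa using hy1)
  have hb : (b : F) = 0 := by rw [← hy2, hy0, S.map_zero]
  exact Subtype.ext hb

theorem partIn_mem_graph_iff {S : F →ₗ.[ℂ] F} {Y : Submodule ℂ F} {a b : Y} :
    (a, b) ∈ (partIn S Y).graph ↔ ((a : F), (b : F)) ∈ S.graph := by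
  rw [partIn_graph_eq, Submodule.mem_comap]
  rfl

theorem partIn_graph_pair {S : F →ₗ.[ℂ] F} {Y : Submodule ℂ F} (a : (partIn S Y).domain) :
    ((((a : Y) : F), ((partIn S Y a : Y) : F)) : F × F) ∈ S.graph :=
  partIn_mem_graph_iff.mp ((partIn S Y).mem_graph a)

theorem partIn_coe_mem_domain {S : F →ₗ.[ℂ] F} {Y : Submodule ℂ F}
    (a : (partIn S Y).domain) : ((a : Y) : F) ∈ S.domain := by
  rcases S.mem_graph_iff.mp (partIn_graph_pair a) with ⟨y, hy1, _⟩
  dsimp only at hy1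
  rw [← hy1]; exact y.2

theorem partIn_apply_coe {S : F →ₗ.[ℂ] F} {Y : Submodule ℂ F}
    (a : (partIn S Y).domain) (h : ((a : Y) : F) ∈ S.domain) :
    ((partIn S Y a : Y) : F) = S ⟨(a : Y), h⟩ := by
  rcases S.mem_graph_iff.mp (partIn_graph_pair a) with ⟨y, hy1, hy2⟩
  dsimp only at hy1 hy2
  have hy : y = ⟨((a : Y) : F), h⟩ := Subtype.ext hy1
  rw [← hy2, hy]

theorem partIn_mem_domain {S : F →ₗ.[ℂ] F} {Y : Submodule ℂ F} {a : Y}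
    (h : (a : F) ∈ S.domain) (hS : (S ⟨(a : F), h⟩ : F) ∈ Y) : a ∈ (partIn S Y).domain := by
  have hg : ((a, ⟨S ⟨(a : F), h⟩, hS⟩) : Y × Y) ∈ (partIn S Y).graph :=
    partIn_mem_graph_iff.mpr (S.mem_graph ⟨a, h⟩)
  rw [← LinearPMap.graph_map_fst_eq_domain]
  exact Submodule.mem_map.mpr ⟨_, hg, rfl⟩

theorem isResolventAt_perturb [CompleteSpace F] {T : F →ₗ.[ℂ] F} {lam0 lam : ℂ}
    {R : F →L[ℂ] F} (hR : IsResolventAt T lam0 R) (hsm : ‖lam - lam0‖ * ‖R‖ < 1) :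
    ∃ R' : F →L[ℂ] F, IsResolventAt T lam R' ∧
      ‖R'‖ ≤ ‖R‖ * (1 - ‖lam - lam0‖ * ‖R‖)⁻¹ := by
  set t : F →L[ℂ] F := (lam - lam0) • R with ht
  have htn : ‖t‖ ≤ ‖lam - lam0‖ * ‖R‖ := (norm_smul (lam - lam0) R).le
  have htlt : ‖t‖ < 1 := lt_of_le_of_lt htn hsm
  set u : (F →L[ℂ] F)ˣ := Units.oneSub t htlt with hu
  set Q : F →L[ℂ] F := ↑u⁻¹ with hQdef
  have hcommu : Commute R (u : F →L[ℂ] F) :=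
    ((Commute.one_right R).sub_right ((Commute.refl R).smul_right _))
  have hcommQ : Commute R Q := hcommu.units_inv_right
  have hQu : ∀ x : F, Q (x - t x) = x := by
    intro x
    have h1 : (Q * (u : F →L[ℂ] F)) x = x := by rw [u.inv_mul]; rfl
    have h2 : ((u : F →L[ℂ] F)) x = x - t x := by
      show ((1 - t) : F →L[ℂ] F) x = x - t x
      simp
    rw [← h2]
    exact h1
  have huQ : ∀ x : F, Q x - t (Q x) = x := by
    intro x
    have h1 : ((u : F →L[ℂ] F) * Q) x = x := by rw [u.mul_inv]; rfl
    have h2 : ((u : F →L[ℂ] F)) (Q x) = Q x - t (Q x) := by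
      show ((1 - t) : F →L[ℂ] F) (Q x) = _
      simp
    rw [← h2]
    exact h1
  refine ⟨R * Q, ⟨?_, ?_, ?_⟩, ?_⟩
  · intro x
    exact hR.1 (Q x)
  · intro x
    have h2 : (R * Q) (T x - lam • (x : F)) = Q (R (T x - lam • (x : F))) := by
      rw [hcommQ.eq]; rfl
    have h3 : R (T x - lam • (x : F)) = (x : F) - t (x : F) := by
      have harg : T x - lam • (x : F) = (T x - lam0 • (x : F)) - (lam - lam0) • (x : F) := by
        rw [sub_smul]; abel
      rw [harg, map_sub, hR.2.1 x, R.map_smul]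
      simp only [ht, ContinuousLinearMap.smul_apply]
    show (R * Q) (T x - lam • (x : F)) = (x : F)
    rw [h2, h3, hQu]
  · intro x hx
    have hx' : R (Q x) ∈ T.domain := hx
    have h5 := hR.2.2 (Q x) hx'
    have h6 : (T ⟨R (Q x), hx'⟩ : F) = Q x + lam0 • R (Q x) := sub_eq_iff_eq_add.mp h5
    show T ⟨R (Q x), hx'⟩ - lam • (R (Q x)) = x
    rw [h6]
    have h7 : t (Q x) = lam • R (Q x) - lam0 • R (Q x) := by
      rw [ht]
      simp only [sub_smul, ContinuousLinearMap.sub_apply, ContinuousLinearMap.smul_apply]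
    have h8 : Q x + lam0 • R (Q x) - lam • R (Q x) = Q x - t (Q x) := by
      rw [h7]; abel
    rw [h8]
    exact huQ x
  · have h9 : Q = ∑' n : ℕ, t ^ n := rfl
    have h10 := tsum_geometric_le_of_norm_lt_one t htlt
    have h11 : ‖(1 : F →L[ℂ] F)‖ ≤ 1 := ContinuousLinearMap.norm_id_le
    have hQ : ‖Q‖ ≤ (1 - ‖t‖)⁻¹ := by rw [h9]; linarith
    have hpos : (0:ℝ) < 1 - ‖lam - lam0‖ * ‖R‖ := by linarith
    have hmono : (1 - ‖t‖)⁻¹ ≤ (1 - ‖lam - lam0‖ * ‖R‖)⁻¹ := by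
      apply inv_anti₀ hpos
      linarith
    calc ‖R * Q‖ ≤ ‖R‖ * ‖Q‖ := norm_mul_le _ _
      _ ≤ ‖R‖ * (1 - ‖lam - lam0‖ * ‖R‖)⁻¹ :=
          mul_le_mul_of_nonneg_left (le_trans hQ hmono) (norm_nonneg R)

/-- If `lam` is in the resolvent set of both `S` and the part of `S` in `Y`, then `Y` is
invariant under the resolvent of `S` at `lam`. -/
theorem res_mem_of_part {S : F →ₗ.[ℂ] F} {Y : Submodule ℂ F} {lam : ℂ}
    (hl : lam ∈ resolvSet S) (hlY : lam ∈ resolvSet (partIn S Y)) :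
    ∀ x ∈ Y, res S lam x ∈ Y := by
  intro x hx
  have hR := res_spec hl
  have hRY := res_spec hlY
  set y : Y := res (partIn S Y) lam ⟨x, hx⟩ with hy
  have hyd : y ∈ (partIn S Y).domain := hRY.1 ⟨x, hx⟩
  have h3 := hRY.2.2 ⟨x, hx⟩ hyd
  have hdom : (y : F) ∈ S.domain := partIn_coe_mem_domain ⟨y, hyd⟩
  have h4 : S ⟨(y : F), hdom⟩ - lam • (y : F) = x := by
    have := congrArg (Subtype.val : Y → F) h3
    rw [AddSubgroupClass.coe_sub, SetLike.val_smul,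
      partIn_apply_coe (⟨y, hyd⟩ : (partIn S Y).domain) hdom] at this
    exact this
  have h5 := hR.2.1 ⟨(y : F), hdom⟩
  rw [h4] at h5
  rw [h5]
  exact y.2

/-- `Y`-invariance of the resolvent from invariance of the operator and the domain
decomposition. -/
theorem dich_res_mem_aux {S : F →ₗ.[ℂ] F} {Y Z : Submodule ℂ F}
    (hcompl : IsCompl Y Z)
    (hdec : S.domain = S.domain ⊓ Y ⊔ S.domain ⊓ Z)
    (hinvY : ∀ x : S.domain, (x : F) ∈ Y → S x ∈ Y)
    (hinvZ : ∀ x : S.domain, (x : F) ∈ Z → S x ∈ Z)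
    {lam : ℂ} (hl : lam ∈ resolvSet S) : ∀ x ∈ Y, res S lam x ∈ Y := by
  intro x hx
  have hR := res_spec hl
  set R := res S lam with hRdef
  have hy : R x ∈ S.domain := hR.1 x
  have hy' : R x ∈ S.domain ⊓ Y ⊔ S.domain ⊓ Z := hdec ▸ hy
  rcases Submodule.mem_sup.mp hy' with ⟨a, ha, b, hb, hab⟩
  rw [Submodule.mem_inf] at ha hb
  set aS : S.domain := ⟨a, ha.1⟩
  set bS : S.domain := ⟨b, hb.1⟩
  have hxab : (⟨R x, hy⟩ : S.domain) = aS + bS := Subtype.ext (by simpa using hab.symm)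
  have h3 := hR.2.2 x hy
  have hSx : S ⟨R x, hy⟩ = S aS + S bS := by rw [hxab, S.map_add]
  have hxdec : (S aS - lam • a) + (S bS - lam • b) = x := by
    rw [← h3, hSx, ← hab]
    rw [smul_add]
    abel
  have hu : S aS - lam • a ∈ Y := Y.sub_mem (hinvY aS ha.2) (Y.smul_mem lam ha.2)
  have hv : S bS - lam • b ∈ Z := Z.sub_mem (hinvZ bS hb.2) (Z.smul_mem lam hb.2)
  have hvY : S bS - lam • b ∈ Y := by
    have : S bS - lam • b = x - (S aS - lam • a) := by rw [← hxdec]; abel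
    rw [this]
    exact Y.sub_mem hx hu
  have hv0 : S bS - lam • b = 0 := by
    have := Submodule.disjoint_def.mp hcompl.disjoint _ hvY hv
    exact this
  have hb0 : b = 0 := by
    have h6 := hR.2.1 bS
    rw [show S bS - lam • (bS : F) = 0 from hv0] at h6
    rw [map_zero R] at h6
    exact h6.symm
  rw [← hab, hb0, add_zero]
  exact ha.2

/-- If `lam ∈ ρ(S)` and the resolvent leaves `Y` invariant, then `lam ∈ ρ(S|_Y)`. -/
theorem mem_resolvSet_part {S : F →ₗ.[ℂ] F} {Y : Submodule ℂ F} {lam : ℂ}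
    (hl : lam ∈ resolvSet S)
    (hres : ∀ x ∈ Y, res S lam x ∈ Y) :
    lam ∈ resolvSet (partIn S Y) := by
  have hR := res_spec hl
  set R := res S lam with hRdef
  refine ⟨(R.comp Y.subtypeL).codRestrict Y (fun a => hres a a.2), ?_, ?_, ?_⟩
  · intro b
    have h1 : R (b : F) ∈ S.domain := hR.1 b
    have h3 := hR.2.2 (b : F) h1
    have h2 : S ⟨R (b : F), h1⟩ ∈ Y := by
      have h4 : (S ⟨R (b : F), h1⟩ : F) = (b : F) + lam • R (b : F) :=
        sub_eq_iff_eq_add.mp h3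
      rw [h4]
      exact Y.add_mem b.2 (Y.smul_mem lam (hres b b.2))
    exact partIn_mem_domain h1 h2
  · intro b
    apply Subtype.ext
    have hbd : ((b : Y) : F) ∈ S.domain := partIn_coe_mem_domain b
    have h4 := hR.2.1 ⟨((b : Y) : F), hbd⟩
    have h5 : ((partIn S Y b - lam • (b : Y) : Y) : F)
        = S ⟨((b : Y) : F), hbd⟩ - lam • ((b : Y) : F) := by
      simp only [AddSubgroupClass.coe_sub, SetLike.val_smul]
      rw [partIn_apply_coe b hbd]
    show R ((partIn S Y b - lam • (b : Y) : Y) : F) = ((b : Y) : F)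
    rw [h5]
    exact h4
  · intro b hb
    apply Subtype.ext
    have hbd : R ((b : Y) : F) ∈ S.domain := hR.1 _
    have h6 := hR.2.2 ((b : Y) : F) hbd
    simp only [AddSubgroupClass.coe_sub, SetLike.val_smul]
    rw [partIn_apply_coe ⟨_, hb⟩ hbd]
    exact h6

/-- Build a resolvent of `S` out of resolvents of its parts. -/
theorem isResolventAt_of_parts {S : F →ₗ.[ℂ] F} {Xp Xm : Submodule ℂ F}
    (hdec : S.domain = S.domain ⊓ Xp ⊔ S.domain ⊓ Xm)
    (hinvp : ∀ x : S.domain, (x : F) ∈ Xp → S x ∈ Xp)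
    (hinvm : ∀ x : S.domain, (x : F) ∈ Xm → S x ∈ Xm)
    {Pp : F →L[ℂ] Xp} {Pm : F →L[ℂ] Xm}
    (hP : ∀ x : F, ((Pp x : F) + (Pm x : F)) = x)
    (hPp : ∀ (p : Xp) (m : Xm), Pp ((p : F) + (m : F)) = p)
    (hPm : ∀ (p : Xp) (m : Xm), Pm ((p : F) + (m : F)) = m)
    {lam : ℂ} {Rp : Xp →L[ℂ] Xp} {Rm : Xm →L[ℂ] Xm}
    (hRp : IsResolventAt (partIn S Xp) lam Rp)
    (hRm : IsResolventAt (partIn S Xm) lam Rm) :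
    IsResolventAt S lam
      (Xp.subtypeL.comp (Rp.comp Pp) + Xm.subtypeL.comp (Rm.comp Pm)) := by
  set R : F →L[ℂ] F := Xp.subtypeL.comp (Rp.comp Pp) + Xm.subtypeL.comp (Rm.comp Pm) with hR
  have hRapp : ∀ x : F, R x = ((Rp (Pp x) : Xp) : F) + ((Rm (Pm x) : Xm) : F) := fun x => rfl
  refine ⟨?_, ?_, ?_⟩
  · intro x
    rw [hRapp]
    exact S.domain.add_mem (partIn_coe_mem_domain ⟨_, hRp.1 (Pp x)⟩)
      (partIn_coe_mem_domain ⟨_, hRm.1 (Pm x)⟩)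
  · intro x
    have hx : (x : F) ∈ S.domain ⊓ Xp ⊔ S.domain ⊓ Xm := hdec ▸ x.2
    rcases Submodule.mem_sup.mp hx with ⟨a, ha, b, hb, hab⟩
    rw [Submodule.mem_inf] at ha hb
    set aS : S.domain := ⟨a, ha.1⟩
    set bS : S.domain := ⟨b, hb.1⟩
    have hxab : x = aS + bS := Subtype.ext (by simpa using hab.symm)
    have hSx : S x = S aS + S bS := by rw [hxab, S.map_add]
    have hSa : S aS ∈ Xp := hinvp aS ha.2
    have hSb : S bS ∈ Xm := hinvm bS hb.2
    set u : Xp := ⟨S aS - lam • a, Xp.sub_mem hSa (Xp.smul_mem lam ha.2)⟩ with hudef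
    set v : Xm := ⟨S bS - lam • b, Xm.sub_mem hSb (Xm.smul_mem lam hb.2)⟩ with hvdef
    have hkey : S x - lam • (x : F) = (u : F) + (v : F) := by
      show S x - lam • (x : F) = (S aS - lam • a) + (S bS - lam • b)
      rw [hSx, ← hab, smul_add]
      abel
    rw [hkey, hRapp, hPp u v, hPm u v]
    have haD : (⟨a, ha.2⟩ : Xp) ∈ (partIn S Xp).domain := partIn_mem_domain ha.1 hSa
    have hbD : (⟨b, hb.2⟩ : Xm) ∈ (partIn S Xm).domain := partIn_mem_domain hb.1 hSb
    set aP : (partIn S Xp).domain := ⟨⟨a, ha.2⟩, haD⟩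
    set bP : (partIn S Xm).domain := ⟨⟨b, hb.2⟩, hbD⟩
    have h1 : partIn S Xp aP - lam • ((aP : Xp)) = u := by
      apply Subtype.ext
      simp only [AddSubgroupClass.coe_sub, SetLike.val_smul]
      rw [partIn_apply_coe aP ha.1]
    have h2 : partIn S Xm bP - lam • ((bP : Xm)) = v := by
      apply Subtype.ext
      simp only [AddSubgroupClass.coe_sub, SetLike.val_smul]
      rw [partIn_apply_coe bP hb.1]
    have h3 : Rp u = ⟨a, ha.2⟩ := by rw [← h1]; exact hRp.2.1 aP
    have h4 : Rm v = ⟨b, hb.2⟩ := by rw [← h2]; exact hRm.2.1 bP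
    rw [h3, h4]
    exact hab
  · intro x hx
    set p : Xp := Rp (Pp x) with hpdef
    set m : Xm := Rm (Pm x) with hmdef
    have hpD : p ∈ (partIn S Xp).domain := hRp.1 _
    have hmD : m ∈ (partIn S Xm).domain := hRm.1 _
    have hpd : (p : F) ∈ S.domain := partIn_coe_mem_domain ⟨p, hpD⟩
    have hmd : (m : F) ∈ S.domain := partIn_coe_mem_domain ⟨m, hmD⟩
    have hx' : (⟨R x, hx⟩ : S.domain) = ⟨(p : F), hpd⟩ + ⟨(m : F), hmd⟩ :=
      Subtype.ext (by simpa using hRapp x)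
    have hSR : S ⟨R x, hx⟩ = S ⟨(p : F), hpd⟩ + S ⟨(m : F), hmd⟩ := by rw [hx', S.map_add]
    have h5 := hRp.2.2 (Pp x) hpD
    have h6 := hRm.2.2 (Pm x) hmD
    have h7 : S ⟨(p : F), hpd⟩ - lam • (p : F) = ((Pp x : Xp) : F) := by
      have := congrArg (Subtype.val : Xp → F) h5
      rw [AddSubgroupClass.coe_sub, SetLike.val_smul,
        partIn_apply_coe (⟨p, hpD⟩ : (partIn S Xp).domain) hpd] at this
      exact this
    have h8 : S ⟨(m : F), hmd⟩ - lam • (m : F) = ((Pm x : Xm) : F) := by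
      have := congrArg (Subtype.val : Xm → F) h6
      rw [AddSubgroupClass.coe_sub, SetLike.val_smul,
        partIn_apply_coe (⟨m, hmD⟩ : (partIn S Xm).domain) hmd] at this
      exact this
    have h9 : S ⟨R x, hx⟩ - lam • R x
        = (S ⟨(p : F), hpd⟩ - lam • (p : F)) + (S ⟨(m : F), hmd⟩ - lam • (m : F)) := by
      rw [hSR, hRapp x, smul_add]
      abel
    rw [h9, h7, h8]
    exact hP x

/-- Continuous projections associated with a decomposition into closed complementary
subspaces of a Banach space. -/
theorem exists_projections [CompleteSpace F] {Xp Xm : Submodule ℂ F}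
    (hp : IsClosed (Xp : Set F)) (hm : IsClosed (Xm : Set F)) (hc : IsCompl Xp Xm) :
    ∃ (Pp : F →L[ℂ] Xp) (Pm : F →L[ℂ] Xm),
      (∀ x : F, ((Pp x : F) + (Pm x : F) = x)) ∧
      (∀ (p : Xp) (m : Xm), Pp ((p : F) + (m : F)) = p) ∧
      (∀ (p : Xp) (m : Xm), Pm ((p : F) + (m : F)) = m) := by
  haveI : CompleteSpace Xp := hp.completeSpace_coe
  haveI : CompleteSpace Xm := hm.completeSpace_coe
  set f : (Xp × Xm) →L[ℂ] F := Xp.subtypeL.coprod Xm.subtypeL with hf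
  have hker : f.ker = ⊥ := by
    rw [hf, ContinuousLinearMap.ker_coprod_of_disjoint_range]
    · rw [Submodule.ker_subtypeL, Submodule.ker_subtypeL, Submodule.prod_bot]
    · rw [Submodule.range_subtypeL, Submodule.range_subtypeL]
      exact hc.disjoint
  have hrange : f.range = ⊤ := by
    rw [hf, ContinuousLinearMap.range_coprod, Submodule.range_subtypeL,
      Submodule.range_subtypeL]
    exact hc.sup_eq_top
  set e := ContinuousLinearEquiv.ofBijective f hker hrange with he
  have hef : ∀ z : Xp × Xm, e z = (z.1 : F) + (z.2 : F) := by
    intro z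
    rw [he, ContinuousLinearEquiv.coeFn_ofBijective]
    rfl
  refine ⟨(ContinuousLinearMap.fst ℂ Xp Xm).comp (e.symm : F →L[ℂ] (Xp × Xm)),
    (ContinuousLinearMap.snd ℂ Xp Xm).comp (e.symm : F →L[ℂ] (Xp × Xm)), ?_, ?_, ?_⟩
  · intro x
    have h1 : e (e.symm x) = x := e.apply_symm_apply x
    rw [hef] at h1
    exact h1
  · intro p m
    have h2 : e.symm ((p : F) + (m : F)) = (p, m) := by
      rw [← hef (p, m)]
      exact e.symm_apply_apply (p, m)
    show ((e.symm ((p : F) + (m : F))) : Xp × Xm).1 = p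
    rw [h2]
  · intro p m
    have h2 : e.symm ((p : F) + (m : F)) = (p, m) := by
      rw [← hef (p, m)]
      exact e.symm_apply_apply (p, m)
    show ((e.symm ((p : F) + (m : F))) : Xp × Xm).2 = m
    rw [h2]

end AuxLemmas


variable {X : Type*} [NormedAddCommGroup X] [NormedSpace ℂ X] [CompleteSpace X]

/-- block structure of a dichotomous operator, and the uniform resolvent
bound on a strip for a strictly dichotomous operator. -/
theorem statement2 (S : X →ₗ.[ℂ] X) (Xp Xm : Submodule ℂ X)
    (hdich : IsDichotomousWrt S Xp Xm) :
    S.domain = S.domain ⊓ Xp ⊔ S.domain ⊓ Xm ∧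
    pSpectrum S = pSpectrum (partIn S Xp) ∪ pSpectrum (partIn S Xm) ∧
    (∀ lam ∈ resolvSet S, ∀ x ∈ Xp, res S lam x ∈ Xp) ∧
    (∀ lam ∈ resolvSet S, ∀ x ∈ Xm, res S lam x ∈ Xm) ∧
    (IsStrictlyDichotomousWrt S Xp Xm →
      ∃ h M : ℝ, 0 < h ∧ 0 < M ∧
        ∀ lam : ℂ, |lam.re| ≤ h → lam ∈ resolvSet S ∧ ‖res S lam‖ ≤ M) := by
  have h0res : (0 : ℂ) ∈ resolvSet S := by simpa using hdich.imag 0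
  have hresp : ∀ lam : ℂ, lam.re ≤ 0 → lam ∈ resolvSet (partIn S Xp) := by
    intro lam hlam
    by_contra hc
    have h1 : lam ∈ pSpectrum (partIn S Xp) := hc
    have := hdich.spec_p h1
    simp only [Set.mem_setOf_eq] at this
    linarith
  have hresm : ∀ lam : ℂ, 0 ≤ lam.re → lam ∈ resolvSet (partIn S Xm) := by
    intro lam hlam
    by_contra hc
    have h1 : lam ∈ pSpectrum (partIn S Xm) := hc
    have := hdich.spec_m h1
    simp only [Set.mem_setOf_eq] at this
    linarith
  have hdec : S.domain = S.domain ⊓ Xp ⊔ S.domain ⊓ Xm := by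
    apply le_antisymm
    · intro x hx
      have hR := res_spec h0res
      have hmemp : ∀ y ∈ Xp, res S 0 y ∈ Xp :=
        res_mem_of_part h0res (hresp 0 (by simp))
      have hmemm : ∀ y ∈ Xm, res S 0 y ∈ Xm :=
        res_mem_of_part h0res (hresm 0 (by simp))
      have hkey : res S 0 (S ⟨x, hx⟩) = x := by
        have := hR.2.1 ⟨x, hx⟩
        simpa using this
      have hmem : (S ⟨x, hx⟩ : X) ∈ Xp ⊔ Xm := by
        rw [hdich.compl.sup_eq_top]; trivial
      rcases Submodule.mem_sup.mp hmem with ⟨p, hp, m, hm, hpm⟩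
      apply Submodule.mem_sup.mpr
      refine ⟨res S 0 p, Submodule.mem_inf.mpr ⟨hR.1 p, hmemp p hp⟩,
        res S 0 m, Submodule.mem_inf.mpr ⟨hR.1 m, hmemm m hm⟩, ?_⟩
      rw [← map_add, hpm, hkey]
    · exact sup_le inf_le_left inf_le_left
  have hdec' : S.domain = S.domain ⊓ Xm ⊔ S.domain ⊓ Xp := by rw [sup_comm]; exact hdec
  have hinvp : ∀ lam ∈ resolvSet S, ∀ x ∈ Xp, res S lam x ∈ Xp := fun lam hl =>
    dich_res_mem_aux hdich.compl hdec hdich.inv_p hdich.inv_m hl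
  have hinvm : ∀ lam ∈ resolvSet S, ∀ x ∈ Xm, res S lam x ∈ Xm := fun lam hl =>
    dich_res_mem_aux hdich.compl.symm hdec' hdich.inv_m hdich.inv_p hl
  obtain ⟨Pp, Pm, hP, hPp, hPm⟩ :=
    exists_projections hdich.closed_p hdich.closed_m hdich.compl
  have hforward : ∀ lam ∈ resolvSet S,
      lam ∈ resolvSet (partIn S Xp) ∧ lam ∈ resolvSet (partIn S Xm) := fun lam hl =>
    ⟨mem_resolvSet_part hl (hinvp lam hl), mem_resolvSet_part hl (hinvm lam hl)⟩
  have hback : ∀ lam : ℂ, lam ∈ resolvSet (partIn S Xp) → lam ∈ resolvSet (partIn S Xm) →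
      lam ∈ resolvSet S := fun lam h1 h2 =>
    ⟨_, isResolventAt_of_parts hdec hdich.inv_p hdich.inv_m hP hPp hPm
      (res_spec h1) (res_spec h2)⟩
  have hspec : pSpectrum S = pSpectrum (partIn S Xp) ∪ pSpectrum (partIn S Xm) := by
    ext lam
    simp only [pSpectrum, Set.mem_union, Set.mem_compl_iff]
    constructor
    · intro hl
      by_contra hc
      push_neg at hc
      exact hl (hback lam hc.1 hc.2)
    · rintro (hl | hl) hmem
      · exact hl (hforward lam hmem).1
      · exact hl (hforward lam hmem).2
  refine ⟨hdec, hspec, hinvp, hinvm, ?_⟩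
  intro hstrict
  obtain ⟨Mp, hMp⟩ := hstrict.bnd_p
  obtain ⟨Mm, hMm⟩ := hstrict.bnd_m
  haveI : CompleteSpace Xp := hdich.closed_p.completeSpace_coe
  haveI : CompleteSpace Xm := hdich.closed_m.completeSpace_coe
  have hMp0 : 0 ≤ Mp := le_trans (norm_nonneg _) (hMp 0 (by simp)).2
  have hMm0 : 0 ≤ Mm := le_trans (norm_nonneg _) (hMm 0 (by simp)).2
  set K : ℝ := Mp + Mm + 1 with hK
  have hK0 : 0 < K := by rw [hK]; linarith
  set h : ℝ := 1 / (2 * K) with hh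
  have hh0 : 0 < h := by rw [hh]; positivity
  have hhK : h * K = 1 / 2 := by rw [hh]; field_simp
  have hstripP : ∀ lam : ℂ, |lam.re| ≤ h →
      lam ∈ resolvSet (partIn S Xp) ∧ ‖res (partIn S Xp) lam‖ ≤ 2 * K := by
    intro lam hlam
    set lam0 : ℂ := (lam.im : ℂ) * Complex.I with hlam0
    have hre : lam0.re = 0 := by simp [hlam0]
    obtain ⟨hres0, hnorm0⟩ := hMp lam0 (le_of_eq hre)
    have hdiff : ‖lam - lam0‖ = |lam.re| := by
      have heq : lam - lam0 = ((lam.re : ℝ) : ℂ) := by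
        apply Complex.ext <;> simp [hlam0]
      rw [heq, Complex.norm_real, Real.norm_eq_abs]
    have hsm : ‖lam - lam0‖ * ‖res (partIn S Xp) lam0‖ ≤ 1 / 2 := by
      rw [hdiff]
      calc |lam.re| * ‖res (partIn S Xp) lam0‖ ≤ h * Mp :=
            mul_le_mul hlam hnorm0 (norm_nonneg _) (le_of_lt hh0)
        _ ≤ h * K := by
            apply mul_le_mul_of_nonneg_left _ (le_of_lt hh0)
            rw [hK]; linarith
        _ = 1 / 2 := hhK
    have hsm1 : ‖lam - lam0‖ * ‖res (partIn S Xp) lam0‖ < 1 :=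
      lt_of_le_of_lt hsm (by norm_num)
    obtain ⟨R', hR', hnR'⟩ := isResolventAt_perturb (res_spec hres0) hsm1
    refine ⟨⟨R', hR'⟩, ?_⟩
    rw [res_eq hR']
    have hinv2 : (1 - ‖lam - lam0‖ * ‖res (partIn S Xp) lam0‖)⁻¹ ≤ 2 := by
      rw [show (2:ℝ) = ((1:ℝ)/2)⁻¹ by norm_num]
      exact inv_anti₀ (by norm_num) (by linarith)
    calc ‖R'‖ ≤ ‖res (partIn S Xp) lam0‖ *
          (1 - ‖lam - lam0‖ * ‖res (partIn S Xp) lam0‖)⁻¹ := hnR'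
      _ ≤ Mp * 2 := mul_le_mul hnorm0 hinv2 (inv_nonneg.mpr (by linarith)) hMp0
      _ ≤ 2 * K := by rw [hK]; linarith
  have hstripM : ∀ lam : ℂ, |lam.re| ≤ h →
      lam ∈ resolvSet (partIn S Xm) ∧ ‖res (partIn S Xm) lam‖ ≤ 2 * K := by
    intro lam hlam
    set lam0 : ℂ := (lam.im : ℂ) * Complex.I with hlam0
    have hre : lam0.re = 0 := by simp [hlam0]
    obtain ⟨hres0, hnorm0⟩ := hMm lam0 (ge_of_eq hre)
    have hdiff : ‖lam - lam0‖ = |lam.re| := by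
      have heq : lam - lam0 = ((lam.re : ℝ) : ℂ) := by
        apply Complex.ext <;> simp [hlam0]
      rw [heq, Complex.norm_real, Real.norm_eq_abs]
    have hsm : ‖lam - lam0‖ * ‖res (partIn S Xm) lam0‖ ≤ 1 / 2 := by
      rw [hdiff]
      calc |lam.re| * ‖res (partIn S Xm) lam0‖ ≤ h * Mm :=
            mul_le_mul hlam hnorm0 (norm_nonneg _) (le_of_lt hh0)
        _ ≤ h * K := by
            apply mul_le_mul_of_nonneg_left _ (le_of_lt hh0)
            rw [hK]; linarith
        _ = 1 / 2 := hhK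
    have hsm1 : ‖lam - lam0‖ * ‖res (partIn S Xm) lam0‖ < 1 :=
      lt_of_le_of_lt hsm (by norm_num)
    obtain ⟨R', hR', hnR'⟩ := isResolventAt_perturb (res_spec hres0) hsm1
    refine ⟨⟨R', hR'⟩, ?_⟩
    rw [res_eq hR']
    have hinv2 : (1 - ‖lam - lam0‖ * ‖res (partIn S Xm) lam0‖)⁻¹ ≤ 2 := by
      rw [show (2:ℝ) = ((1:ℝ)/2)⁻¹ by norm_num]
      exact inv_anti₀ (by norm_num) (by linarith)
    calc ‖R'‖ ≤ ‖res (partIn S Xm) lam0‖ *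
          (1 - ‖lam - lam0‖ * ‖res (partIn S Xm) lam0‖)⁻¹ := hnR'
      _ ≤ Mm * 2 := mul_le_mul hnorm0 hinv2 (inv_nonneg.mpr (by linarith)) hMm0
      _ ≤ 2 * K := by rw [hK]; linarith
  have hM0 : 0 < 2 * K * ‖Pp‖ + 2 * K * ‖Pm‖ + 1 := by
    have h1 := mul_nonneg (by linarith : (0:ℝ) ≤ 2 * K) (norm_nonneg Pp)
    have h2 := mul_nonneg (by linarith : (0:ℝ) ≤ 2 * K) (norm_nonneg Pm)
    linarith
  refine ⟨h, 2 * K * ‖Pp‖ + 2 * K * ‖Pm‖ + 1, hh0, hM0, ?_⟩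
  intro lam hlam
  obtain ⟨hrp, hnp⟩ := hstripP lam hlam
  obtain ⟨hrm, hnm⟩ := hstripM lam hlam
  have hRres := isResolventAt_of_parts hdec hdich.inv_p hdich.inv_m hP hPp hPm
    (res_spec hrp) (res_spec hrm)
  refine ⟨⟨_, hRres⟩, ?_⟩
  rw [res_eq hRres]
  have hb1 : ‖Xp.subtypeL.comp ((res (partIn S Xp) lam).comp Pp)‖ ≤ 2 * K * ‖Pp‖ := by
    have t1 := ContinuousLinearMap.opNorm_comp_le Xp.subtypeL
      ((res (partIn S Xp) lam).comp Pp)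
    have t2 := ContinuousLinearMap.opNorm_comp_le (res (partIn S Xp) lam) Pp
    have t3 := Submodule.norm_subtypeL_le Xp
    have t4 : ‖res (partIn S Xp) lam‖ * ‖Pp‖ ≤ 2 * K * ‖Pp‖ :=
      mul_le_mul_of_nonneg_right hnp (ContinuousLinearMap.opNorm_nonneg Pp)
    nlinarith [norm_nonneg ((res (partIn S Xp) lam).comp Pp), norm_nonneg Xp.subtypeL]
  have hb2 : ‖Xm.subtypeL.comp ((res (partIn S Xm) lam).comp Pm)‖ ≤ 2 * K * ‖Pm‖ := by
    have t1 := ContinuousLinearMap.opNorm_comp_le Xm.subtypeL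
      ((res (partIn S Xm) lam).comp Pm)
    have t2 := ContinuousLinearMap.opNorm_comp_le (res (partIn S Xm) lam) Pm
    have t3 := Submodule.norm_subtypeL_le Xm
    have t4 : ‖res (partIn S Xm) lam‖ * ‖Pm‖ ≤ 2 * K * ‖Pm‖ :=
      mul_le_mul_of_nonneg_right hnm (ContinuousLinearMap.opNorm_nonneg Pm)
    nlinarith [norm_nonneg ((res (partIn S Xm) lam).comp Pm), norm_nonneg Xm.subtypeL]
  calc ‖Xp.subtypeL.comp ((res (partIn S Xp) lam).comp Pp) +
        Xm.subtypeL.comp ((res (partIn S Xm) lam).comp Pm)‖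
      ≤ ‖Xp.subtypeL.comp ((res (partIn S Xp) lam).comp Pp)‖ +
        ‖Xm.subtypeL.comp ((res (partIn S Xm) lam).comp Pm)‖ := norm_add_le _ _
    _ ≤ 2 * K * ‖Pp‖ + 2 * K * ‖Pm‖ + 1 := by linarith

end
end

section
/- Let S be an almost bisectorial operator on X with constants M > 0 and 0 < β < 1, i.e. ‖(S − λ)⁻¹‖ ≤ M/|λ|^β for all λ ∈ iℝ ∖ {0}. Then for every 0 < α < 1/M the parabola-shaped region Ω = {a + ib ∈ ℂ ∖ {0} : a, b ∈ ℝ, |a| ≤ α|b|^β} is contained in ρ(S), and there exists M' > 0 such that ‖(S − λ)⁻¹‖ ≤ M'/|λ|^β for all λ ∈ Ω. -/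
open Complex MeasureTheory Set Filter

noncomputable section

variable {E : Type*} [NormedAddCommGroup E] [NormedSpace ℂ E]

variable {X : Type*} [NormedAddCommGroup X] [NormedSpace ℂ X] [CompleteSpace X]


/-! ### Auxiliary lemmas -/

lemma aux_resolvent_unique {S : E →ₗ.[ℂ] E} {lam : ℂ} {R R' : E →L[ℂ] E}
    (h : IsResolventAt S lam R) (h' : IsResolventAt S lam R') : R = R' := by
  ext x
  have hx := h.1 x
  have h3 := h.2.2 x hx
  have h2 := h'.2.1 ⟨R x, hx⟩
  rw [show ((⟨R x, hx⟩ : S.domain) : E) = R x from rfl] at h2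
  rw [h3] at h2
  exact h2.symm

lemma aux_res_isResolventAt {S : E →ₗ.[ℂ] E} {lam : ℂ} (h : lam ∈ resolvSet S) :
    IsResolventAt S lam (res S lam) := by
  have h' : ∃ R, IsResolventAt S lam R := h
  rw [res, dif_pos h']
  exact h'.choose_spec

lemma aux_res_eq {S : E →ₗ.[ℂ] E} {lam : ℂ} {R : E →L[ℂ] E} (h : IsResolventAt S lam R) :
    res S lam = R :=
  aux_resolvent_unique (aux_res_isResolventAt ⟨R, h⟩) h

lemma aux_pert {F : Type*} [NormedAddCommGroup F] [NormedSpace ℂ F] [CompleteSpace F]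
    {S : F →ₗ.[ℂ] F} {μ : ℂ} {R : F →L[ℂ] F} (hR : IsResolventAt S μ R)
    (lam : ℂ) (h : ‖lam - μ‖ * ‖R‖ < 1) :
    lam ∈ resolvSet S ∧ ‖res S lam‖ ≤ ‖R‖ / (1 - ‖lam - μ‖ * ‖R‖) := by
  set c : ℂ := lam - μ with hc
  have hsm : ‖c • R‖ ≤ ‖c‖ * ‖R‖ := norm_smul_le c R
  have hnorm : ‖c • R‖ < 1 := lt_of_le_of_lt hsm h
  set u : (F →L[ℂ] F)ˣ := Units.oneSub (c • R) hnorm with hu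
  set V : F →L[ℂ] F := ↑u⁻¹ with hV
  have huval : (u : F →L[ℂ] F) = 1 - c • R := rfl
  have hcomm : Commute ((u : F →L[ℂ] F)) R := by
    rw [huval]
    exact ((Commute.one_left R).sub_left ((Commute.refl R).smul_left c))
  have hVcomm : Commute V R := hcomm.units_inv_left
  have hVu : V * (1 - c • R) = 1 := by rw [← huval]; exact u.inv_mul
  have huV : (1 - c • R) * V = 1 := by rw [← huval]; exact u.mul_inv
  have key : IsResolventAt S lam (R * V) := by
    refine ⟨fun x => hR.1 (V x), ?_, ?_⟩
    · intro x
      have e1 : S x - lam • (x : F) = (S x - μ • (x : F)) - c • (x : F) := by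
        rw [hc]; module
      have e2 : (R * V) (S x - lam • (x : F)) = (V * R) (S x - lam • (x : F)) := by
        rw [hVcomm.eq]
      rw [e2, e1]
      have e3 : R ((S x - μ • (x : F)) - c • (x : F)) = (x : F) - c • R (x : F) := by
        rw [map_sub, hR.2.1 x, R.map_smul]
      show V (R ((S x - μ • (x : F)) - c • (x : F))) = (x : F)
      rw [e3]
      calc V ((x : F) - c • R (x : F)) = (V * (1 - c • R)) (x : F) := by
            simp [ContinuousLinearMap.sub_apply]
        _ = (x : F) := by rw [hVu]; rfl
    · intro x hx
      have hx' : R (V x) ∈ S.domain := hx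
      have h3 := hR.2.2 (V x) hx'
      have e : S (⟨(R * V) x, hx⟩ : S.domain) - lam • (R * V) x
          = (S (⟨R (V x), hx'⟩ : S.domain) - μ • R (V x)) - c • R (V x) := by
        rw [hc]
        show S (⟨R (V x), hx'⟩ : S.domain) - lam • R (V x) = _
        module
      rw [e, h3]
      calc V x - c • R (V x) = ((1 - c • R) * V) x := by
            simp [ContinuousLinearMap.sub_apply]
        _ = x := by rw [huV]; rfl
  refine ⟨⟨R * V, key⟩, ?_⟩
  rw [aux_res_eq key]
  have hVnorm : ‖V‖ ≤ (1 - ‖c • R‖)⁻¹ := by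
    have ht := tsum_geometric_le_of_norm_lt_one (c • R) hnorm
    have h1 : ‖(1 : F →L[ℂ] F)‖ ≤ 1 := ContinuousLinearMap.norm_id_le
    have h2 : ‖V‖ ≤ ‖(1 : F →L[ℂ] F)‖ - 1 + (1 - ‖c • R‖)⁻¹ := ht
    linarith
  have hpos : 0 < 1 - ‖c • R‖ := by linarith
  calc ‖R * V‖ ≤ ‖R‖ * ‖V‖ := norm_mul_le R V
    _ ≤ ‖R‖ * (1 - ‖c • R‖)⁻¹ := mul_le_mul_of_nonneg_left hVnorm (norm_nonneg R)
    _ ≤ ‖R‖ * (1 - ‖c‖ * ‖R‖)⁻¹ := by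
        have h1 : 0 < 1 - ‖c‖ * ‖R‖ := by linarith
        have h2 : (1 - ‖c • R‖)⁻¹ ≤ (1 - ‖c‖ * ‖R‖)⁻¹ := by
          apply inv_anti₀ h1; linarith
        exact mul_le_mul_of_nonneg_left h2 (norm_nonneg R)
    _ = ‖R‖ / (1 - ‖lam - μ‖ * ‖R‖) := by rw [div_eq_mul_inv, hc]

/-- the resolvent set of an almost bisectorial operator contains a
parabola shaped region around the imaginary axis, with the same resolvent decay. -/
theorem statement11 (S : X →ₗ.[ℂ] X) (M β : ℝ) (hab : AlmostBisectorial S M β) :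
    ∀ α : ℝ, 0 < α → α < 1 / M →
      (∀ lam : ℂ, lam ≠ 0 → |lam.re| ≤ α * |lam.im| ^ β → lam ∈ resolvSet S) ∧
      ∃ M' : ℝ, 0 < M' ∧ ∀ lam : ℂ, lam ≠ 0 → |lam.re| ≤ α * |lam.im| ^ β →
        ‖res S lam‖ ≤ M' / ‖lam‖ ^ β := by
  intro α hα hαM
  obtain ⟨hM, hβ0, hβ1, hres⟩ := hab
  have hαM1 : α * M < 1 := (lt_div_iff₀ hM).mp hαM
  have h1β : (0:ℝ) < 1 - β := by linarith
  obtain ⟨δ, hδpos, hδpow⟩ : ∃ δ : ℝ, 0 < δ ∧ δ ^ (1-β) = (4*M)⁻¹ := by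
    refine ⟨((4*M)⁻¹) ^ ((1-β)⁻¹), Real.rpow_pos_of_pos (by positivity) _, ?_⟩
    rw [← Real.rpow_mul (by positivity), inv_mul_cancel₀ h1β.ne', Real.rpow_one]
  obtain ⟨s, hspos, hsδ1, hsδ2⟩ : ∃ s : ℝ, 0 < s ∧ α * s ^ β ≤ δ/2 ∧ s ≤ δ/2 := by
    refine ⟨min ((δ/(2*α)) ^ β⁻¹) (δ/2),
      lt_min (Real.rpow_pos_of_pos (by positivity) _) (by positivity), ?_, min_le_right _ _⟩
    have h1 : (min ((δ/(2*α)) ^ β⁻¹) (δ/2)) ^ β ≤ ((δ/(2*α)) ^ β⁻¹) ^ β :=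
      Real.rpow_le_rpow
        (le_min (Real.rpow_pos_of_pos (by positivity) _).le (by positivity))
        (min_le_left _ _) hβ0.le
    have h2 : ((δ/(2*α)) ^ β⁻¹) ^ β = δ/(2*α) := by
      rw [← Real.rpow_mul (by positivity), inv_mul_cancel₀ hβ0.ne', Real.rpow_one]
    rw [h2] at h1
    have h3 := mul_le_mul_of_nonneg_left h1 hα.le
    have h4 : α * (δ/(2*α)) = δ/2 := by
      field_simp
      try ring
    linarith
  obtain ⟨K, hK1, hKeq⟩ : ∃ K : ℝ, 1 ≤ K ∧ K = 1 + α * s ^ (β-1) := by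
    refine ⟨1 + α * s ^ (β-1), ?_, rfl⟩
    have := Real.rpow_pos_of_pos hspos (β-1)
    nlinarith
  obtain ⟨M', hM'pos, hM'1, hM'2⟩ :
      ∃ M' : ℝ, 0 < M' ∧ 2*M ≤ M' ∧ M*K/(1-α*M) ≤ M' := by
    refine ⟨max (2*M) (M*K/(1-α*M)), ?_, le_max_left _ _, le_max_right _ _⟩
    exact lt_of_lt_of_le (by linarith) (le_max_left _ _)
  have key : ∀ lam : ℂ, lam ≠ 0 → |lam.re| ≤ α * |lam.im| ^ β →
      lam ∈ resolvSet S ∧ ‖res S lam‖ ≤ M' / ‖lam‖ ^ β := by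
    intro lam hlam hreg
    have habs : 0 < ‖lam‖ := norm_pos_iff.mpr hlam
    have hlpow : 0 < ‖lam‖ ^ β := Real.rpow_pos_of_pos habs β
    by_cases hcase : ‖lam‖ ≤ δ
    · -- small case: base point μ = |lam| i
      set μ : ℂ := (‖lam‖ : ℂ) * Complex.I with hμdef
      have hμre : μ.re = 0 := by simp [hμdef]
      have hμ0 : μ ≠ 0 := by
        rw [hμdef]
        exact mul_ne_zero (by exact_mod_cast habs.ne') Complex.I_ne_zero
      obtain ⟨hmem, hbnd⟩ := hres μ hμre hμ0
      have hRA : IsResolventAt S μ (res S μ) := aux_res_isResolventAt hmem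
      have habsμ : ‖μ‖ = ‖lam‖ := by
        rw [hμdef, norm_mul, Complex.norm_real, Complex.norm_I, Real.norm_eq_abs, abs_of_pos habs, mul_one]
      rw [habsμ] at hbnd
      have hdist : ‖lam - μ‖ ≤ 2 * ‖lam‖ := by
        calc ‖lam - μ‖ ≤ ‖lam‖ + ‖μ‖ := norm_sub_le _ _
          _ = 2 * ‖lam‖ := by
              rw [habsμ]; ring
      have hq : ‖lam - μ‖ * ‖res S μ‖ ≤ 1/2 := by
        calc ‖lam - μ‖ * ‖res S μ‖
            ≤ (2 * ‖lam‖) * (M / ‖lam‖ ^ β) :=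
              mul_le_mul hdist hbnd (norm_nonneg _) (by positivity)
          _ = 2*M * ‖lam‖ ^ (1-β) := by
              rw [Real.rpow_sub habs, Real.rpow_one]; ring
          _ ≤ 2*M * δ ^ (1-β) := by
              have h5 := Real.rpow_le_rpow habs.le hcase h1β.le
              have h6 := mul_le_mul_of_nonneg_left h5 (by linarith : (0:ℝ) ≤ 2*M)
              linarith
          _ = 2*M * (4*M)⁻¹ := by rw [hδpow]
          _ = 1/2 := by
              field_simp
              try ring
      obtain ⟨hmem', hb⟩ := aux_pert hRA lam (lt_of_le_of_lt hq one_half_lt_one)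
      refine ⟨hmem', hb.trans ?_⟩
      have h2 : 1/2 ≤ 1 - ‖lam - μ‖ * ‖res S μ‖ := by linarith
      calc ‖res S μ‖ / (1 - ‖lam - μ‖ * ‖res S μ‖)
          ≤ ‖res S μ‖ / (1/2) :=
            div_le_div_of_nonneg_left (norm_nonneg _) (by norm_num) h2
        _ = 2 * ‖res S μ‖ := by ring
        _ ≤ 2 * (M / ‖lam‖ ^ β) := by linarith
        _ = (2*M) / ‖lam‖ ^ β := by ring
        _ ≤ M' / ‖lam‖ ^ β := div_le_div_of_nonneg_right hM'1 hlpow.le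
    · -- large case: base point μ = (Im lam) i
      push_neg at hcase
      have hbs : s < |lam.im| := by
        by_contra hb'
        push_neg at hb'
        have hb2 : |lam.im| ^ β ≤ s ^ β := Real.rpow_le_rpow (abs_nonneg _) hb' hβ0.le
        have h1 : |lam.re| ≤ δ/2 := by
          have h7 := mul_le_mul_of_nonneg_left hb2 hα.le
          linarith
        have h2 : |lam.im| ≤ δ/2 := hb'.trans hsδ2
        have h3 := Complex.norm_le_abs_re_add_abs_im lam
        linarith
      have hb0 : lam.im ≠ 0 := by
        intro h; rw [h, abs_zero] at hbs; linarith
      have hbpos : 0 < |lam.im| := lt_trans hspos hbs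
      have hbpow : 0 < |lam.im| ^ β := Real.rpow_pos_of_pos hbpos β
      set μ : ℂ := (lam.im : ℂ) * Complex.I with hμdef
      have hμre : μ.re = 0 := by simp [hμdef]
      have hμ0 : μ ≠ 0 := by
        rw [hμdef]
        exact mul_ne_zero (by exact_mod_cast hb0) Complex.I_ne_zero
      obtain ⟨hmem, hbnd⟩ := hres μ hμre hμ0
      have habsμ : ‖μ‖ = |lam.im| := by
        rw [hμdef, norm_mul, Complex.norm_real, Complex.norm_I, Real.norm_eq_abs, mul_one]
      rw [habsμ] at hbnd
      have hRA : IsResolventAt S μ (res S μ) := aux_res_isResolventAt hmem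
      have hdist : ‖lam - μ‖ = |lam.re| := by
        have e : lam - μ = (lam.re : ℂ) := by
          rw [hμdef]; apply Complex.ext <;> simp
        rw [e, Complex.norm_real, Real.norm_eq_abs]
      have hq : ‖lam - μ‖ * ‖res S μ‖ ≤ α * M := by
        calc ‖lam - μ‖ * ‖res S μ‖ ≤ (α * |lam.im| ^ β) * (M / |lam.im| ^ β) := by
              apply mul_le_mul (hdist ▸ hreg) hbnd (norm_nonneg _) (by positivity)
          _ = α * M := by
              field_simp
              try ring
      obtain ⟨hmem', hbd⟩ := aux_pert hRA lam (lt_of_le_of_lt hq hαM1)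
      refine ⟨hmem', ?_⟩
      have hden0 : 0 < 1 - α*M := by linarith
      have hden : 1 - α*M ≤ 1 - ‖lam - μ‖ * ‖res S μ‖ := by linarith
      have hstep1 : ‖res S lam‖ ≤ (M / |lam.im| ^ β) / (1 - α*M) := by
        calc ‖res S lam‖ ≤ ‖res S μ‖ / (1 - ‖lam - μ‖ * ‖res S μ‖) := hbd
          _ ≤ ‖res S μ‖ / (1 - α*M) :=
              div_le_div_of_nonneg_left (norm_nonneg _) hden0 hden
          _ ≤ (M / |lam.im| ^ β) / (1 - α*M) :=
              div_le_div_of_nonneg_right hbnd hden0.le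
      have hKb : ‖lam‖ ≤ K * |lam.im| := by
        have e1 : |lam.im| ^ β = |lam.im| ^ (β-1) * |lam.im| := by
          rw [← Real.rpow_add_one hbpos.ne' (β-1)]; ring_nf
        have e2 : |lam.im| ^ (β-1) ≤ s ^ (β-1) :=
          Real.rpow_le_rpow_of_nonpos hspos hbs.le (by linarith)
        have h3 := mul_le_mul_of_nonneg_left
          (mul_le_mul_of_nonneg_right e2 (abs_nonneg lam.im)) hα.le
        calc ‖lam‖ ≤ |lam.re| + |lam.im| := Complex.norm_le_abs_re_add_abs_im lam
          _ ≤ α * |lam.im| ^ β + |lam.im| := by linarith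
          _ ≤ α * (s ^ (β-1) * |lam.im|) + |lam.im| := by rw [e1]; linarith
          _ = K * |lam.im| := by rw [hKeq]; ring
      have hKpow : ‖lam‖ ^ β ≤ K * |lam.im| ^ β := by
        calc ‖lam‖ ^ β ≤ (K * |lam.im|) ^ β :=
              Real.rpow_le_rpow habs.le hKb hβ0.le
          _ = K ^ β * |lam.im| ^ β := Real.mul_rpow (by linarith) (abs_nonneg _)
          _ ≤ K * |lam.im| ^ β := by
              have hKβ : K ^ β ≤ K := by
                calc K ^ β ≤ K ^ (1:ℝ) :=
                      Real.rpow_le_rpow_of_exponent_le hK1 hβ1.le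
                  _ = K := Real.rpow_one K
              exact mul_le_mul_of_nonneg_right hKβ hbpow.le
      rw [le_div_iff₀ hlpow]
      calc ‖res S lam‖ * ‖lam‖ ^ β
          ≤ ((M / |lam.im| ^ β) / (1 - α*M)) * (K * |lam.im| ^ β) := by
            apply mul_le_mul hstep1 hKpow hlpow.le (by positivity)
        _ = M*K/(1-α*M) := by
            field_simp
            try ring
        _ ≤ M' := hM'2
  exact ⟨fun lam h1 h2 => (key lam h1 h2).1, M', hM'pos, fun lam h1 h2 => (key lam h1 h2).2⟩

end
end

section
/- Let S be an almost bisectorial operator on X (so that 0 ∈ ρ(S), S satisfies condition (H) with some constants h, M, and the operators A_±, B_± and P_± = S²A_± are defined). Then P_± = SB_±, i.e. D(P_±) = {x ∈ X : B_±x ∈ D(S)} and P_±x = SB_±x; in particular D(S) ⊆ D(P₊) ∩ D(P₋) and, for every x ∈ D(S), P_±x = ±(2πi)⁻¹ ∫_{Re λ = ±h} λ⁻¹ (S − λ)⁻¹ Sx dλ, i.e. P_±x = ±(2π)⁻¹ ∫_ℝ (±h + it)⁻¹ (S − (±h + it))⁻¹ Sx dt for h > 0 sufficiently small. -/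
open Complex MeasureTheory Set Filter

noncomputable section

variable {E : Type*} [NormedAddCommGroup E] [NormedSpace ℂ E]

variable {X : Type*} [NormedAddCommGroup X] [NormedSpace ℂ X] [CompleteSpace X]

/-! ### Auxiliary lemmas -/

set_option linter.unusedSectionVars false
open Topology

section MyAux

theorem isResolventAt_res {S : X →ₗ.[ℂ] X} {lam : ℂ} (h : lam ∈ resolvSet S) :
    IsResolventAt S lam (res S lam) := by
  have h' : ∃ R, IsResolventAt S lam R := h
  simp only [res, dif_pos h']
  exact h'.choose_spec

theorem pmap_congr (S : X →ₗ.[ℂ] X) {a b : X} (hab : a = b) (ha : a ∈ S.domain)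
    (hb : b ∈ S.domain) : S ⟨a, ha⟩ = S ⟨b, hb⟩ := by subst hab; rfl

theorem pmap_smul (S : X →ₗ.[ℂ] X) (c : ℂ) {v : X} (hv : v ∈ S.domain)
    (hcv : c • v ∈ S.domain) : S ⟨c • v, hcv⟩ = c • S ⟨v, hv⟩ := by
  have h1 : (⟨c • v, hcv⟩ : S.domain) = c • (⟨v, hv⟩ : S.domain) := rfl
  rw [h1, S.map_smul]

theorem clm_norm_smul (c : ℂ) (T : X →L[ℂ] X) : ‖c • T‖ = ‖c‖ * ‖T‖ := norm_smul c T

theorem res_mem {S : X →ₗ.[ℂ] X} {lam : ℂ} (h : lam ∈ resolvSet S) (x : X) :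
    res S lam x ∈ S.domain := (isResolventAt_res h).1 x

theorem S_res {S : X →ₗ.[ℂ] X} {lam : ℂ} (h : lam ∈ resolvSet S) (x : X) :
    S ⟨res S lam x, res_mem h x⟩ = x + lam • res S lam x :=
  sub_eq_iff_eq_add.mp ((isResolventAt_res h).2.2 x (res_mem h x))

theorem res_S {S : X →ₗ.[ℂ] X} {lam : ℂ} (h : lam ∈ resolvSet S) (x : S.domain) :
    res S lam (S x) = (x : X) + lam • res S lam (x : X) := by
  have h2 := (isResolventAt_res h).2.1 x
  rw [map_sub, _root_.map_smul] at h2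
  exact sub_eq_iff_eq_add.mp h2

theorem res_id {S : X →ₗ.[ℂ] X} {lam mu : ℂ} (hl : lam ∈ resolvSet S) (hm : mu ∈ resolvSet S)
    (x : X) : res S mu x = res S lam x + (mu - lam) • res S lam (res S mu x) := by
  have h1 : res S lam (S ⟨res S mu x, res_mem hm x⟩ - lam • res S mu x) = res S mu x :=
    (isResolventAt_res hl).2.1 ⟨res S mu x, res_mem hm x⟩
  rw [S_res hm x] at h1
  calc res S mu x = res S lam (x + mu • res S mu x - lam • res S mu x) := h1.symm
    _ = res S lam x + (mu - lam) • res S lam (res S mu x) := by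
        simp only [map_sub, map_add, _root_.map_smul, sub_smul]
        abel

theorem res_id_op {S : X →ₗ.[ℂ] X} {lam mu : ℂ} (hl : lam ∈ resolvSet S)
    (hm : mu ∈ resolvSet S) :
    res S mu = res S lam + (mu - lam) • ((res S lam).comp (res S mu)) := by
  ext x
  simp only [ContinuousLinearMap.add_apply, ContinuousLinearMap.smul_apply,
    ContinuousLinearMap.comp_apply]
  exact res_id hl hm x

theorem line_re (σ t : ℝ) : ((σ : ℂ) + t * I).re = σ := by simp

theorem line_im (σ t : ℝ) : ((σ : ℂ) + t * I).im = t := by simp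

theorem line_ne {σ : ℝ} (hσ : σ ≠ 0) (t : ℝ) : (σ : ℂ) + t * I ≠ 0 := fun h =>
  hσ (by simpa using congrArg Complex.re h)

theorem line_abs_re (σ t : ℝ) : |σ| ≤ ‖(σ : ℂ) + t * I‖ := by
  simpa [line_re] using Complex.abs_re_le_norm ((σ : ℂ) + t * I)

theorem line_abs_im (σ t : ℝ) : |t| ≤ ‖(σ : ℂ) + t * I‖ := by
  simpa [line_im] using Complex.abs_im_le_norm ((σ : ℂ) + t * I)

theorem line_inv_re {σ : ℝ} (hσ : σ ≠ 0) (t : ℝ) : ‖((σ : ℂ) + t * I)⁻¹‖ ≤ |σ|⁻¹ := by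
  rw [norm_inv]
  exact inv_anti₀ (abs_pos.mpr hσ) (by simpa using line_abs_re σ t)

theorem line_inv_im {σ : ℝ} (hσ : σ ≠ 0) {t : ℝ} (ht : t ≠ 0) :
    ‖((σ : ℂ) + t * I)⁻¹‖ ≤ |t|⁻¹ := by
  rw [norm_inv]
  exact inv_anti₀ (abs_pos.mpr ht) (by simpa using line_abs_im σ t)

theorem line_cont (σ : ℝ) : Continuous fun t : ℝ => (σ : ℂ) + t * I :=
  continuous_const.add (Complex.continuous_ofReal.mul continuous_const)

theorem line_mem {S : X →ₗ.[ℂ] X} {hh M₀ : ℝ} (hH : CondH S hh M₀) {σ : ℝ} (hσ : |σ| ≤ hh)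
    (t : ℝ) : (σ : ℂ) + t * I ∈ resolvSet S :=
  (hH.2 _ (by simpa [line_re] using hσ)).1

theorem line_norm {S : X →ₗ.[ℂ] X} {hh M₀ : ℝ} (hH : CondH S hh M₀) {σ : ℝ} (hσ : |σ| ≤ hh)
    (t : ℝ) : ‖res S ((σ : ℂ) + t * I)‖ ≤ M₀ :=
  (hH.2 _ (by simpa [line_re] using hσ)).2

theorem M₀_nonneg {S : X →ₗ.[ℂ] X} {hh M₀ : ℝ} (hH : CondH S hh M₀) : 0 ≤ M₀ :=
  le_trans (norm_nonneg _) ((hH.2 0 (by simp [le_of_lt hH.1])).2)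

theorem res_line_cont {S : X →ₗ.[ℂ] X} {hh M₀ : ℝ} (hH : CondH S hh M₀) {σ : ℝ}
    (hσ : |σ| ≤ hh) : Continuous fun t : ℝ => res S ((σ : ℂ) + t * I) := by
  have hM0 := M₀_nonneg hH
  have hL : LipschitzWith (Real.toNNReal (M₀ * M₀)) (fun t : ℝ => res S ((σ : ℂ) + t * I)) := by
    apply LipschitzWith.of_dist_le_mul
    intro t t'
    rw [dist_eq_norm, Real.dist_eq]
    have hid := res_id_op (line_mem hH hσ t') (line_mem hH hσ t)
    have hdiff : res S ((σ : ℂ) + t * I) - res S ((σ : ℂ) + t' * I)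
        = (((σ : ℂ) + t * I) - ((σ : ℂ) + t' * I)) •
          ((res S ((σ : ℂ) + t' * I)).comp (res S ((σ : ℂ) + t * I))) :=
      sub_eq_iff_eq_add'.mpr hid
    rw [hdiff, clm_norm_smul]
    have habs : ‖((σ : ℂ) + t * I) - ((σ : ℂ) + t' * I)‖ = |t - t'| := by
      have : ((σ : ℂ) + t * I) - ((σ : ℂ) + t' * I) = ((t - t' : ℝ) : ℂ) * I := by
        push_cast; ring
      rw [this]
      simp [map_mul, ← Complex.ofReal_sub,
        Complex.norm_real]
    rw [habs, Real.coe_toNNReal _ (by positivity)]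
    have hcomp : ‖(res S ((σ : ℂ) + t' * I)).comp (res S ((σ : ℂ) + t * I))‖ ≤ M₀ * M₀ :=
      le_trans (ContinuousLinearMap.opNorm_comp_le _ _)
        (mul_le_mul (line_norm hH hσ t') (line_norm hH hσ t) (norm_nonneg _) hM0)
    calc |t - t'| * ‖(res S ((σ : ℂ) + t' * I)).comp (res S ((σ : ℂ) + t * I))‖
        ≤ |t - t'| * (M₀ * M₀) := by
          exact mul_le_mul_of_nonneg_left hcomp (abs_nonneg _)
      _ = M₀ * M₀ * |t - t'| := by ring
  exact hL.continuous

theorem res_line_decay {S : X →ₗ.[ℂ] X} {M β hh M₀ : ℝ} (hab : AlmostBisectorial S M β)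
    (hH : CondH S hh M₀) {σ : ℝ} (hσ : |σ| ≤ hh) {t : ℝ} (ht : t ≠ 0) :
    ‖res S ((σ : ℂ) + t * I)‖ ≤ M * (1 + hh * M₀) / |t| ^ β := by
  have hM0 := M₀_nonneg hH
  have hh0 : (0:ℝ) < hh := hH.1
  have him : ((t : ℂ) * I) ∈ resolvSet S :=
    (hab.2.2.2 _ (by simp) (by simp [ht, Complex.ext_iff])).1
  have hbb : ‖res S ((t : ℂ) * I)‖ ≤ M / |t| ^ β := by
    have h2 := (hab.2.2.2 ((t : ℂ) * I) (by simp) (by simp [ht, Complex.ext_iff])).2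
    simpa [map_mul, Complex.norm_real] using h2
  have hmm := line_mem hH hσ t
  have hid := res_id_op him hmm
  have h1 : ‖res S ((σ : ℂ) + t * I)‖
      ≤ ‖res S ((t : ℂ) * I)‖ + |σ| * (‖res S ((t : ℂ) * I)‖ * ‖res S ((σ : ℂ) + t * I)‖) := by
    calc ‖res S ((σ : ℂ) + t * I)‖
        = ‖res S ((t : ℂ) * I) + (((σ : ℂ) + t * I) - (t : ℂ) * I) •
            ((res S ((t : ℂ) * I)).comp (res S ((σ : ℂ) + t * I)))‖ := by rw [← hid]
      _ ≤ ‖res S ((t : ℂ) * I)‖ + ‖(((σ : ℂ) + t * I) - (t : ℂ) * I) •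
            ((res S ((t : ℂ) * I)).comp (res S ((σ : ℂ) + t * I)))‖ := norm_add_le _ _
      _ ≤ ‖res S ((t : ℂ) * I)‖ + |σ| * (‖res S ((t : ℂ) * I)‖ * ‖res S ((σ : ℂ) + t * I)‖) := by
          gcongr
          rw [clm_norm_smul]
          have : ((σ : ℂ) + t * I) - (t : ℂ) * I = (σ : ℂ) := by ring
          rw [this]
          simp only [Complex.norm_real, Real.norm_eq_abs]
          exact mul_le_mul_of_nonneg_left (ContinuousLinearMap.opNorm_comp_le _ _) (abs_nonneg _)
  have htβ : (0:ℝ) < |t| ^ β := Real.rpow_pos_of_pos (abs_pos.mpr ht) β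
  have hrn : ‖res S ((σ : ℂ) + t * I)‖ ≤ M₀ := line_norm hH hσ t
  have key : M * (1 + hh * M₀) / |t| ^ β = (M / |t| ^ β) * (1 + hh * M₀) := by ring
  rw [key]
  have h2 : ‖res S ((σ : ℂ) + t * I)‖ ≤ M / |t| ^ β + hh * ((M / |t| ^ β) * M₀) := by
    refine h1.trans ?_
    have hσh : |σ| * (‖res S ((t : ℂ) * I)‖ * ‖res S ((σ : ℂ) + t * I)‖)
        ≤ hh * ((M / |t| ^ β) * M₀) := by
      have h3 : ‖res S ((t : ℂ) * I)‖ * ‖res S ((σ : ℂ) + t * I)‖ ≤ (M / |t| ^ β) * M₀ :=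
        mul_le_mul hbb hrn (norm_nonneg _) (div_nonneg (le_of_lt hab.1) (le_of_lt htβ))
      exact mul_le_mul (le_trans hσ (le_refl hh)) h3 (by positivity) (le_of_lt hh0)
    exact add_le_add hbb hσh
  exact h2.trans (le_of_eq (by ring))

theorem integrable_aux {F : Type*} [NormedAddCommGroup F] {f : ℝ → F} {β C2 : ℝ}
    (hβ : 0 < β) (hc : Continuous f)
    (hb2 : ∀ t : ℝ, 1 ≤ |t| → ‖f t‖ ≤ C2 * |t| ^ (-(1 + β))) : Integrable f := by
  have htail : ∀ g : ℝ → F, Continuous g → (∀ t : ℝ, 1 ≤ t → ‖g t‖ ≤ C2 * t ^ (-(1 + β))) →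
      IntegrableOn g (Ioi (1 : ℝ)) := by
    intro g hg hbg
    refine Integrable.mono' ((integrableOn_Ioi_rpow_of_lt (a := -(1+β)) (by linarith) one_pos).const_mul C2)
      hg.aestronglyMeasurable.restrict ?_
    filter_upwards [ae_restrict_mem measurableSet_Ioi] with t ht
    exact hbg t (le_of_lt ht)
  rw [← integrableOn_univ, ← Set.Iio_union_Ici (a := (-1 : ℝ)), integrableOn_union]
  constructor
  · rw [← (Measure.measurePreserving_neg (volume : Measure ℝ)).integrableOn_comp_preimage
        (Homeomorph.neg ℝ).measurableEmbedding]
    have hpre : (Neg.neg ⁻¹' Iio (-1 : ℝ)) = Ioi 1 := by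
      ext u
      simp only [Set.mem_preimage, Set.mem_Iio, Set.mem_Ioi]
      constructor <;> intro h' <;> linarith
    rw [hpre]
    refine htail _ (hc.comp continuous_neg) fun t ht => ?_
    have h1t : (1:ℝ) ≤ |(-t : ℝ)| := by rw [_root_.abs_neg, _root_.abs_of_nonneg (by linarith : (0:ℝ) ≤ t)]; exact ht
    have := hb2 (-t) h1t
    rwa [_root_.abs_neg, _root_.abs_of_nonneg (le_trans zero_le_one ht)] at this
  · have h1 : Ici (-1 : ℝ) = Icc (-1) 1 ∪ Ioi 1 := (Set.Icc_union_Ioi_eq_Ici (by norm_num)).symm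
    rw [h1, integrableOn_union]
    refine ⟨hc.integrableOn_Icc, htail _ hc fun t ht => ?_⟩
    have := hb2 t (by rwa [_root_.abs_of_nonneg (le_trans zero_le_one ht)])
    rwa [_root_.abs_of_nonneg (le_trans zero_le_one ht)] at this

theorem rpow_tail {β : ℝ} (hβ1 : β ≤ 1) {t : ℝ} (ht : 1 ≤ |t|) :
    (|t|⁻¹) ^ 2 ≤ |t| ^ (-(1 + β)) := by
  have h0 : (0:ℝ) < |t| := lt_of_lt_of_le one_pos ht
  have h1 : (|t|⁻¹) ^ 2 = |t| ^ (-(2:ℝ)) := by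
    rw [inv_pow, ← Real.rpow_natCast |t| 2, ← Real.rpow_neg (abs_nonneg t)]
    norm_num
  rw [h1]
  exact Real.rpow_le_rpow_of_exponent_le ht (by linarith)

theorem rpow_tail' {β : ℝ} {t : ℝ} (ht : 1 ≤ |t|) :
    |t|⁻¹ * |t| ^ (-β) = |t| ^ (-(1 + β)) := by
  have h0 : (0:ℝ) < |t| := lt_of_lt_of_le one_pos ht
  rw [← Real.rpow_neg_one |t|, ← Real.rpow_add h0]
  ring_nf

theorem integrable_c2_res {S : X →ₗ.[ℂ] X} {M β hh M₀ : ℝ} (hab : AlmostBisectorial S M β)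
    (hH : CondH S hh M₀) {σ : ℝ} (hσ : |σ| ≤ hh) (hσ0 : σ ≠ 0) :
    Integrable fun t : ℝ => (((σ : ℂ) + t * I) ^ 2)⁻¹ • res S ((σ : ℂ) + t * I) := by
  refine integrable_aux (C2 := M₀) hab.2.1 ?_ ?_
  · exact (((line_cont σ).pow 2).inv₀ fun t => pow_ne_zero 2 (line_ne hσ0 t)).smul
      (res_line_cont hH hσ)
  · intro t ht
    have ht0 : t ≠ 0 := by intro h; rw [h] at ht; norm_num at ht
    rw [clm_norm_smul]
    have h1 : ‖(((σ : ℂ) + t * I) ^ 2)⁻¹‖ ≤ (|t|⁻¹) ^ 2 := by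
      rw [← inv_pow, norm_pow]
      exact pow_le_pow_left₀ (norm_nonneg _) (line_inv_im hσ0 ht0) 2
    calc ‖(((σ : ℂ) + t * I) ^ 2)⁻¹‖ * ‖res S ((σ : ℂ) + t * I)‖
        ≤ (|t|⁻¹) ^ 2 * M₀ := mul_le_mul h1 (line_norm hH hσ t) (norm_nonneg _) (by positivity)
      _ ≤ |t| ^ (-(1 + β)) * M₀ := by
          exact mul_le_mul_of_nonneg_right (rpow_tail (le_of_lt hab.2.2.1) ht) (M₀_nonneg hH)
      _ = M₀ * |t| ^ (-(1 + β)) := by ring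

theorem integrable_c1_res {S : X →ₗ.[ℂ] X} {M β hh M₀ : ℝ} (hab : AlmostBisectorial S M β)
    (hH : CondH S hh M₀) {σ : ℝ} (hσ : |σ| ≤ hh) (hσ0 : σ ≠ 0) :
    Integrable fun t : ℝ => ((σ : ℂ) + t * I)⁻¹ • res S ((σ : ℂ) + t * I) := by
  refine integrable_aux (C2 := M * (1 + hh * M₀)) hab.2.1 ?_ ?_
  · exact ((line_cont σ).inv₀ fun t => line_ne hσ0 t).smul (res_line_cont hH hσ)
  · intro t ht
    have ht0 : t ≠ 0 := by intro h; rw [h] at ht; norm_num at ht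
    rw [clm_norm_smul]
    calc ‖((σ : ℂ) + t * I)⁻¹‖ * ‖res S ((σ : ℂ) + t * I)‖
        ≤ |t|⁻¹ * (M * (1 + hh * M₀) / |t| ^ β) :=
          mul_le_mul (line_inv_im hσ0 ht0) (res_line_decay hab hH hσ ht0) (norm_nonneg _)
            (by positivity)
      _ = M * (1 + hh * M₀) * (|t|⁻¹ * |t| ^ (-β)) := by
          rw [Real.rpow_neg (abs_nonneg t)]; ring
      _ = M * (1 + hh * M₀) * |t| ^ (-(1 + β)) := by rw [rpow_tail' ht]

theorem integrable_c2 {σ : ℝ} (hσ0 : σ ≠ 0) :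
    Integrable fun t : ℝ => (((σ : ℂ) + t * I) ^ 2)⁻¹ := by
  refine integrable_aux (β := 1/2) (C2 := 1) (by norm_num)
    (((line_cont σ).pow 2).inv₀ fun t => pow_ne_zero 2 (line_ne hσ0 t)) ?_
  intro t ht
  have ht0 : t ≠ 0 := by intro h; rw [h] at ht; norm_num at ht
  have h1 : ‖(((σ : ℂ) + t * I) ^ 2)⁻¹‖ ≤ (|t|⁻¹) ^ 2 := by
    rw [← inv_pow, norm_pow]
    exact pow_le_pow_left₀ (norm_nonneg _) (line_inv_im hσ0 ht0) 2
  rw [one_mul]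
  exact h1.trans (rpow_tail (by norm_num) ht)

theorem line_hasDerivAt (σ : ℝ) {t : ℝ} (hne : (σ : ℂ) + t * I ≠ 0) :
    HasDerivAt (fun u : ℝ => I * ((σ : ℂ) + u * I)⁻¹) ((((σ : ℂ) + t * I) ^ 2)⁻¹) t := by
  have h1 : HasDerivAt (fun u : ℝ => (σ : ℂ) + u * I) I t := by
    simpa using ((hasDerivAt_id t).ofReal_comp.mul_const I).const_add (σ : ℂ)
  have h2 : HasDerivAt (fun z : ℂ => z⁻¹) (-(((σ : ℂ) + t * I) ^ 2)⁻¹) ((σ : ℂ) + t * I) :=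
    hasDerivAt_inv hne
  have h3 := (h2.scomp t h1 : HasDerivAt (fun u : ℝ => ((σ : ℂ) + u * I)⁻¹) _ t)
  have h4 := h3.const_mul I
  exact h4.congr_deriv (by rw [smul_eq_mul, ← mul_assoc, Complex.I_mul_I]; ring)

theorem line_tendsto_top (σ : ℝ) :
    Tendsto (fun t : ℝ => I * ((σ : ℂ) + t * I)⁻¹) atTop (𝓝 0) := by
  apply squeeze_zero_norm' (a := fun t : ℝ => t⁻¹)
  · filter_upwards [eventually_ge_atTop (1 : ℝ)] with t ht
    have ht0 : t ≠ 0 := by linarith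
    rw [norm_mul, Complex.norm_I, one_mul]
    have h1 : ‖((σ : ℂ) + t * I)⁻¹‖ ≤ |t|⁻¹ := by
      rw [norm_inv]
      exact inv_anti₀ (abs_pos.mpr ht0) (by simpa using line_abs_im σ t)
    rwa [_root_.abs_of_nonneg (by linarith : (0:ℝ) ≤ t)] at h1
  · exact tendsto_inv_atTop_zero

theorem line_tendsto_bot (σ : ℝ) :
    Tendsto (fun t : ℝ => I * ((σ : ℂ) + t * I)⁻¹) atBot (𝓝 0) := by
  apply squeeze_zero_norm' (a := fun t : ℝ => (-t)⁻¹)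
  · filter_upwards [eventually_le_atBot (-1 : ℝ)] with t ht
    have ht0 : t ≠ 0 := by linarith
    rw [norm_mul, Complex.norm_I, one_mul]
    have h1 : ‖((σ : ℂ) + t * I)⁻¹‖ ≤ |t|⁻¹ := by
      rw [norm_inv]
      exact inv_anti₀ (abs_pos.mpr ht0) (by simpa using line_abs_im σ t)
    rwa [abs_of_neg (by linarith : t < 0)] at h1
  · exact tendsto_inv_atTop_zero.comp tendsto_neg_atBot_atTop

theorem integral_sq_inv_line (σ : ℝ) (hσ0 : σ ≠ 0) :
    (∫ t : ℝ, (((σ : ℂ) + t * I) ^ 2)⁻¹) = 0 := by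
  have hne := line_ne hσ0
  set F : ℝ → ℂ := fun t => I * ((σ : ℂ) + t * I)⁻¹ with hF
  have hderiv : ∀ t : ℝ, HasDerivAt F ((((σ : ℂ) + t * I) ^ 2)⁻¹) t := fun t =>
    line_hasDerivAt σ (hne t)
  have hint := integrable_c2 (σ := σ) hσ0
  have hIoi : (∫ t in Ioi (0:ℝ), (((σ : ℂ) + t * I) ^ 2)⁻¹) = 0 - F 0 :=
    integral_Ioi_of_hasDerivAt_of_tendsto (hderiv 0).continuousAt.continuousWithinAt
      (fun t _ => hderiv t) hint.integrableOn (line_tendsto_top σ)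
  have hIic : (∫ t in Iic (0:ℝ), (((σ : ℂ) + t * I) ^ 2)⁻¹) = F 0 - 0 :=
    integral_Iic_of_hasDerivAt_of_tendsto (hderiv 0).continuousAt.continuousWithinAt
      (fun t _ => hderiv t) hint.integrableOn (line_tendsto_bot σ)
  rw [← intervalIntegral.integral_Iic_add_Ioi hint.integrableOn hint.integrableOn, hIoi, hIic]
  ring

theorem mem_and_eq_of_integral {S : X →ₗ.[ℂ] X} (h0 : (0 : ℂ) ∈ resolvSet S) {f g : ℝ → X}
    (hg : Integrable g)
    (hfd : ∀ t, ∃ ht : f t ∈ S.domain, S ⟨f t, ht⟩ = g t) :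
    ∃ hd : (∫ t, f t) ∈ S.domain, S ⟨∫ t, f t, hd⟩ = ∫ t, g t := by
  have hR : ∀ t, f t = res S 0 (g t) := by
    intro t
    obtain ⟨ht, hst⟩ := hfd t
    have h2 : res S 0 (S ⟨f t, ht⟩ - (0 : ℂ) • f t) = f t :=
      (isResolventAt_res h0).2.1 ⟨f t, ht⟩
    rw [hst, zero_smul, sub_zero] at h2
    exact h2.symm
  have hfi : (∫ t, f t) = res S 0 (∫ t, g t) := by
    calc (∫ t, f t) = ∫ t, res S 0 (g t) := by simp_rw [hR]
      _ = res S 0 (∫ t, g t) := ContinuousLinearMap.integral_comp_comm _ hg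
  have hd : (∫ t, f t) ∈ S.domain := by rw [hfi]; exact res_mem h0 _
  refine ⟨hd, ?_⟩
  rw [pmap_congr S hfi hd (res_mem h0 _), S_res h0]
  simp

theorem integrable_c2_res_apply {S : X →ₗ.[ℂ] X} {M β hh M₀ : ℝ} (hab : AlmostBisectorial S M β)
    (hH : CondH S hh M₀) {σ : ℝ} (hσ : |σ| ≤ hh) (hσ0 : σ ≠ 0) (x : X) :
    Integrable fun t : ℝ => (((σ : ℂ) + t * I) ^ 2)⁻¹ • res S ((σ : ℂ) + t * I) x := by
  have h1 := (integrable_c2_res hab hH hσ hσ0).apply_continuousLinearMap x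
  simpa using h1

theorem integrable_c1_res_apply {S : X →ₗ.[ℂ] X} {M β hh M₀ : ℝ} (hab : AlmostBisectorial S M β)
    (hH : CondH S hh M₀) {σ : ℝ} (hσ : |σ| ≤ hh) (hσ0 : σ ≠ 0) (x : X) :
    Integrable fun t : ℝ => ((σ : ℂ) + t * I)⁻¹ • res S ((σ : ℂ) + t * I) x := by
  have h1 := (integrable_c1_res hab hH hσ hσ0).apply_continuousLinearMap x
  simpa using h1

theorem core1 {S : X →ₗ.[ℂ] X} {M β hh M₀ : ℝ} (hab : AlmostBisectorial S M β)
    (hH : CondH S hh M₀) {σ : ℝ} (hσ : |σ| ≤ hh) (hσ0 : σ ≠ 0) (x : X) :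
    ∃ hd : (∫ t : ℝ, (((σ : ℂ) + t * I) ^ 2)⁻¹ • res S ((σ : ℂ) + t * I) x) ∈ S.domain,
      S ⟨∫ t : ℝ, (((σ : ℂ) + t * I) ^ 2)⁻¹ • res S ((σ : ℂ) + t * I) x, hd⟩
        = ∫ t : ℝ, ((σ : ℂ) + t * I)⁻¹ • res S ((σ : ℂ) + t * I) x := by
  have h0 : (0 : ℂ) ∈ resolvSet S := (hH.2 0 (by simp [le_of_lt hH.1])).1
  have hg : Integrable fun t : ℝ =>
      (((σ : ℂ) + t * I) ^ 2)⁻¹ • x + ((σ : ℂ) + t * I)⁻¹ • res S ((σ : ℂ) + t * I) x :=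
    ((integrable_c2 hσ0).smul_const x).add (integrable_c1_res_apply hab hH hσ hσ0 x)
  have hfd : ∀ t : ℝ, ∃ ht : (((σ : ℂ) + t * I) ^ 2)⁻¹ • res S ((σ : ℂ) + t * I) x ∈ S.domain,
      S ⟨(((σ : ℂ) + t * I) ^ 2)⁻¹ • res S ((σ : ℂ) + t * I) x, ht⟩
        = (((σ : ℂ) + t * I) ^ 2)⁻¹ • x + ((σ : ℂ) + t * I)⁻¹ • res S ((σ : ℂ) + t * I) x := by
    intro t
    have hm := line_mem hH hσ t
    refine ⟨S.domain.smul_mem _ (res_mem hm x), ?_⟩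
    rw [pmap_smul S _ (res_mem hm x), S_res hm, smul_add, smul_smul]
    have hc : (((σ : ℂ) + t * I) ^ 2)⁻¹ * ((σ : ℂ) + t * I) = ((σ : ℂ) + t * I)⁻¹ := by
      rw [sq, mul_inv]
      field_simp
    rw [hc]
  obtain ⟨hd, he⟩ := mem_and_eq_of_integral h0 hg hfd
  refine ⟨hd, ?_⟩
  rw [he, integral_add ((integrable_c2 hσ0).smul_const x)
    (integrable_c1_res_apply hab hH hσ hσ0 x), integral_smul_const,
    integral_sq_inv_line σ hσ0, zero_smul, zero_add]

theorem core2 {S : X →ₗ.[ℂ] X} {M β hh M₀ : ℝ} (hab : AlmostBisectorial S M β)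
    (hH : CondH S hh M₀) {σ : ℝ} (hσ : |σ| ≤ hh) (hσ0 : σ ≠ 0) (x : X) (hx : x ∈ S.domain) :
    ∃ hd : (∫ t : ℝ, ((σ : ℂ) + t * I)⁻¹ • res S ((σ : ℂ) + t * I) x) ∈ S.domain,
      S ⟨∫ t : ℝ, ((σ : ℂ) + t * I)⁻¹ • res S ((σ : ℂ) + t * I) x, hd⟩
        = ∫ t : ℝ, ((σ : ℂ) + t * I)⁻¹ • res S ((σ : ℂ) + t * I) (S ⟨x, hx⟩) := by
  have h0 : (0 : ℂ) ∈ resolvSet S := (hH.2 0 (by simp [le_of_lt hH.1])).1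
  have hg : Integrable fun t : ℝ =>
      ((σ : ℂ) + t * I)⁻¹ • res S ((σ : ℂ) + t * I) (S ⟨x, hx⟩) :=
    integrable_c1_res_apply hab hH hσ hσ0 (S ⟨x, hx⟩)
  refine mem_and_eq_of_integral h0 hg ?_
  intro t
  have hm := line_mem hH hσ t
  refine ⟨S.domain.smul_mem _ (res_mem hm x), ?_⟩
  rw [pmap_smul S _ (res_mem hm x), S_res hm, res_S hm ⟨x, hx⟩]

end MyAux

/-- for an almost bisectorial operator, `P± = S B±`, so
`D(S) ⊆ D(P±)` and the simplified integral representation holds on `D(S)`. -/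
theorem statement12 (S : X →ₗ.[ℂ] X) (M β : ℝ) (hab : AlmostBisectorial S M β)
    (h M₀ : ℝ) (hH : CondH S h M₀) :
    -- P± = S B±
    (∀ x : X, memD2 S (Aplus S h x) ↔ Bplus S h x ∈ S.domain) ∧
    (∀ x : X, memD2 S (Aminus S h x) ↔ Bminus S h x ∈ S.domain) ∧
    (∀ (x : X) (hx : Bplus S h x ∈ S.domain),
      sqApply S (Aplus S h x) = S ⟨Bplus S h x, hx⟩) ∧
    (∀ (x : X) (hx : Bminus S h x ∈ S.domain),
      sqApply S (Aminus S h x) = S ⟨Bminus S h x, hx⟩) ∧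
    -- D(S) ⊆ D(P±) and the integral representation on D(S)
    (∀ (x : X) (hx : x ∈ S.domain),
      memD2 S (Aplus S h x) ∧ memD2 S (Aminus S h x) ∧
      sqApply S (Aplus S h x) = (2 * (Real.pi : ℂ))⁻¹ •
        ∫ t : ℝ, ((h : ℂ) + (t : ℂ) * Complex.I)⁻¹ •
          res S ((h : ℂ) + (t : ℂ) * Complex.I) (S ⟨x, hx⟩) ∧
      sqApply S (Aminus S h x) = -(2 * (Real.pi : ℂ))⁻¹ •
        ∫ t : ℝ, (-(h : ℂ) + (t : ℂ) * Complex.I)⁻¹ •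
          res S (-(h : ℂ) + (t : ℂ) * Complex.I) (S ⟨x, hx⟩)) := by
  have hσp : |h| ≤ h := le_of_eq (abs_of_pos hH.1)
  have hσp0 : h ≠ 0 := ne_of_gt hH.1
  have hσm : |(-h)| ≤ h := by rw [abs_neg]; exact hσp
  have hσm0 : (-h) ≠ 0 := neg_ne_zero.mpr hσp0
  -- unfolding `Aplus`, `Bplus`, `Aminus`, `Bminus` applied at a vector
  have hApx : ∀ x : X, Aplus S h x = (2 * (Real.pi : ℂ))⁻¹ •
      ∫ t : ℝ, (((h : ℂ) + t * I) ^ 2)⁻¹ • res S ((h : ℂ) + t * I) x := by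
    intro x
    rw [Aplus, ContinuousLinearMap.smul_apply,
      ContinuousLinearMap.integral_apply (integrable_c2_res hab hH hσp hσp0) x]
    simp only [ContinuousLinearMap.smul_apply]
  have hBpx : ∀ x : X, Bplus S h x = (2 * (Real.pi : ℂ))⁻¹ •
      ∫ t : ℝ, ((h : ℂ) + t * I)⁻¹ • res S ((h : ℂ) + t * I) x := by
    intro x
    rw [Bplus, ContinuousLinearMap.smul_apply,
      ContinuousLinearMap.integral_apply (integrable_c1_res hab hH hσp hσp0) x]
    simp only [ContinuousLinearMap.smul_apply]
  have hc2m : Integrable fun t : ℝ => ((-(h : ℂ) + t * I) ^ 2)⁻¹ • res S (-(h : ℂ) + t * I) := by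
    have h1 := integrable_c2_res hab hH hσm hσm0 (S := S)
    simpa [Complex.ofReal_neg] using h1
  have hc1m : Integrable fun t : ℝ => (-(h : ℂ) + t * I)⁻¹ • res S (-(h : ℂ) + t * I) := by
    have h1 := integrable_c1_res hab hH hσm hσm0 (S := S)
    simpa [Complex.ofReal_neg] using h1
  have hAmx : ∀ x : X, Aminus S h x = -(2 * (Real.pi : ℂ))⁻¹ •
      ∫ t : ℝ, ((-(h : ℂ) + t * I) ^ 2)⁻¹ • res S (-(h : ℂ) + t * I) x := by
    intro x
    rw [Aminus, ContinuousLinearMap.smul_apply, ContinuousLinearMap.integral_apply hc2m x]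
    simp only [ContinuousLinearMap.smul_apply]
  have hBmx : ∀ x : X, Bminus S h x = -(2 * (Real.pi : ℂ))⁻¹ •
      ∫ t : ℝ, (-(h : ℂ) + t * I)⁻¹ • res S (-(h : ℂ) + t * I) x := by
    intro x
    rw [Bminus, ContinuousLinearMap.smul_apply, ContinuousLinearMap.integral_apply hc1m x]
    simp only [ContinuousLinearMap.smul_apply]
  -- the key facts : S (A± x) = B± x
  have hAp : ∀ x : X, ∃ hd : Aplus S h x ∈ S.domain, S ⟨Aplus S h x, hd⟩ = Bplus S h x := by
    intro x
    obtain ⟨hd, he⟩ := core1 hab hH hσp hσp0 x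
    have hdA : Aplus S h x ∈ S.domain := by rw [hApx x]; exact S.domain.smul_mem _ hd
    refine ⟨hdA, ?_⟩
    rw [pmap_congr S (hApx x) hdA (S.domain.smul_mem _ hd), pmap_smul S _ hd, he, hBpx x]
  have hAm : ∀ x : X, ∃ hd : Aminus S h x ∈ S.domain, S ⟨Aminus S h x, hd⟩ = Bminus S h x := by
    intro x
    have hcore := core1 hab hH hσm hσm0 x
    simp only [Complex.ofReal_neg] at hcore
    obtain ⟨hd, he⟩ := hcore
    have hdA : Aminus S h x ∈ S.domain := by rw [hAmx x]; exact S.domain.smul_mem _ hd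
    refine ⟨hdA, ?_⟩
    rw [pmap_congr S (hAmx x) hdA (S.domain.smul_mem _ hd), pmap_smul S _ hd, he, hBmx x]
  -- S (B± x) for x ∈ D(S)
  have hBp : ∀ (x : X) (hx : x ∈ S.domain), ∃ hd : Bplus S h x ∈ S.domain,
      S ⟨Bplus S h x, hd⟩ = (2 * (Real.pi : ℂ))⁻¹ •
        ∫ t : ℝ, ((h : ℂ) + t * I)⁻¹ • res S ((h : ℂ) + t * I) (S ⟨x, hx⟩) := by
    intro x hx
    obtain ⟨hd, he⟩ := core2 hab hH hσp hσp0 x hx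
    have hdB : Bplus S h x ∈ S.domain := by rw [hBpx x]; exact S.domain.smul_mem _ hd
    refine ⟨hdB, ?_⟩
    rw [pmap_congr S (hBpx x) hdB (S.domain.smul_mem _ hd), pmap_smul S _ hd, he]
  have hBm : ∀ (x : X) (hx : x ∈ S.domain), ∃ hd : Bminus S h x ∈ S.domain,
      S ⟨Bminus S h x, hd⟩ = -(2 * (Real.pi : ℂ))⁻¹ •
        ∫ t : ℝ, (-(h : ℂ) + t * I)⁻¹ • res S (-(h : ℂ) + t * I) (S ⟨x, hx⟩) := by
    intro x hx
    have hcore := core2 hab hH hσm hσm0 x hx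
    simp only [Complex.ofReal_neg] at hcore
    obtain ⟨hd, he⟩ := hcore
    have hdB : Bminus S h x ∈ S.domain := by rw [hBmx x]; exact S.domain.smul_mem _ hd
    refine ⟨hdB, ?_⟩
    rw [pmap_congr S (hBmx x) hdB (S.domain.smul_mem _ hd), pmap_smul S _ hd, he]
  -- abstract consequences
  have memD2_iff : ∀ (A B : X), (∃ hd : A ∈ S.domain, S ⟨A, hd⟩ = B) →
      (memD2 S A ↔ B ∈ S.domain) := by
    rintro A B ⟨hd, he⟩
    constructor
    · rintro ⟨h1, h2⟩
      rwa [pmap_congr S rfl h1 hd, he] at h2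
    · intro hB
      exact ⟨hd, by rw [he]; exact hB⟩
  have sq_eq : ∀ (A B : X), (∃ hd : A ∈ S.domain, S ⟨A, hd⟩ = B) → ∀ hB : B ∈ S.domain,
      sqApply S A = S ⟨B, hB⟩ := by
    rintro A B ⟨hd, he⟩ hB
    have hm : memD2 S A := ⟨hd, by rw [he]; exact hB⟩
    rw [sqApply, dif_pos hm]
    exact pmap_congr S (by rw [pmap_congr S rfl hm.choose hd, he]) _ _
  refine ⟨fun x => memD2_iff _ _ (hAp x), fun x => memD2_iff _ _ (hAm x),
    fun x hx => sq_eq _ _ (hAp x) hx, fun x hx => sq_eq _ _ (hAm x) hx, ?_⟩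
  intro x hx
  obtain ⟨hdBp, heBp⟩ := hBp x hx
  obtain ⟨hdBm, heBm⟩ := hBm x hx
  refine ⟨(memD2_iff _ _ (hAp x)).mpr hdBp, (memD2_iff _ _ (hAm x)).mpr hdBm, ?_, ?_⟩
  · rw [sq_eq _ _ (hAp x) hdBp]
    exact heBp
  · rw [sq_eq _ _ (hAm x) hdBm]
    exact heBm

end
end
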